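/- arXiv:2405.04631 — 4 statements merged into one kernel-verified Lean document; each statement's English description precedes it below -/
import Mathlib

section
/- Over the field ℂ, the map φ commutes with the Lie algebra action of e ∈ sl_2(ℂ): φ(e·x) = e·φ(x) for every x ∈ Sym^{N−1}E ⊗ ⋀^{N+1}Sym^{d+1}E. -/
open MvPolynomial TensorProduct

set_option maxHeartbeats 1000000
set_option synthInstance.maxHeartbeats 400000

noncomputable section

/-- `Sym' F c` : the `c`-th symmetric power of `E = F²`, realised as the space of
homogeneous polynomials of degree `c` in the two variables `X = X 0`, `Y = X 1`. -/
abbrev Sym' (F : Type*) [Field F] (c : ℕ) : Type _ :=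
  ↥(MvPolynomial.homogeneousSubmodule (Fin 2) F c)

variable (F : Type*) [Field F]

/-- The basis monomial `X^(c-i) Y^i` of `Sym' F c`; it is `0` (junk) if `i > c`. -/
def XY (c i : ℕ) : Sym' F c :=
  if h : i ≤ c then
    ⟨(X 0 : MvPolynomial (Fin 2) F) ^ (c - i) * X 1 ^ i, by
      rw [MvPolynomial.mem_homogeneousSubmodule]
      have := ((isHomogeneous_X_pow (R := F) (0 : Fin 2) (c - i)).mul
        (isHomogeneous_X_pow (R := F) (1 : Fin 2) i))
      rwa [Nat.sub_add_cancel h] at this⟩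
  else 0

/-- `F_∧^{(c)}(k) = X^{c-k₁}Y^{k₁} ∧ ⋯ ∧ X^{c-k_r}Y^{k_r}` in `⋀^r (Sym' F c)`. -/
def wedge (c : ℕ) {r : ℕ} (k : Fin r → ℕ) : ⋀[F]^r (Sym' F c) :=
  ⟨ExteriorAlgebra.ιMulti F r fun a => XY F c (k a),
    ExteriorAlgebra.ιMulti_range F r (Set.mem_range_self _)⟩

/-- `F(i,j) = F_∧^{(d)}(i) ⊗ X^{d-j}Y^j`. -/
def Fp (d : ℕ) {N : ℕ} (i : Fin N → ℕ) (j : ℕ) :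
    (⋀[F]^N (Sym' F d)) ⊗[F] (Sym' F d) :=
  wedge F d i ⊗ₜ[F] XY F d j

/-- The multiplication map `μ_N : ⋀^N V ⊗ V → ⋀^{N+1} V` for `V = Sym' F c`. -/
def mu (c N : ℕ) :
    ((⋀[F]^N (Sym' F c)) ⊗[F] (Sym' F c)) →ₗ[F] ⋀[F]^(N + 1) (Sym' F c) :=
  TensorProduct.lift
    (LinearMap.mk₂ F
      (fun w v => ⟨(w : ExteriorAlgebra F (Sym' F c)) * ExteriorAlgebra.ι F v, by
        have h := Submodule.mul_mem_mul w.2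
          (LinearMap.mem_range_self (ExteriorAlgebra.ι F (M := Sym' F c)) v)
        rwa [← pow_succ] at h⟩)
      (fun w w' v => by ext; simp [add_mul])
      (fun a w v => by ext; simp [mul_assoc, Algebra.smul_mul_assoc])
      (fun w v v' => by ext; simp [mul_add])
      (fun a w v => by ext; simp [Algebra.mul_smul_comm]))

/-- The box `B(k) = [k₁,k₂) × ⋯ × [k_N, k_{N+1})` as a finset of multi-indices. -/
def box {N : ℕ} (k : Fin (N + 1) → ℕ) : Finset (Fin N → ℕ) :=
  Fintype.piFinset fun a : Fin N => Finset.Ico (k a.castSucc) (k a.succ)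

/-- `v_{(s,k)} = Σ_{i ∈ B(k)} F(i, s + |k| - N - |i|)`. -/
def vv (d N : ℕ) (s : ℕ) (k : Fin (N + 1) → ℕ) :
    (⋀[F]^N (Sym' F d)) ⊗[F] (Sym' F d) :=
  ∑ i ∈ box k, Fp F d i (s + (∑ a, k a) - N - ∑ a, i a)

/-- A pair `(i, j)` is semistandard (with entries in `{0,…,d}`). -/
def IsSS (d : ℕ) {N : ℕ} (p : (Fin N → ℕ) × ℕ) : Prop :=
  StrictMono p.1 ∧ (∀ a, p.1 a ≤ d) ∧ p.2 ≤ d ∧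
    ∀ a : Fin N, (a : ℕ) = 0 → p.1 a ≤ p.2

/-- The neighbour map `P`. -/
def Pmap {N : ℕ} (p : (Fin N → ℕ) × ℕ) : (Fin N → ℕ) × ℕ :=
  if h : (Finset.univ.filter fun a : Fin N => p.1 a ≤ p.2).Nonempty then
    let α := (Finset.univ.filter fun a : Fin N => p.1 a ≤ p.2).max' h
    (Function.update p.1 α p.2, p.1 α)
  else p

/-- `F_Δ(i,j)`. -/
def FDelta (d : ℕ) {N : ℕ} (p : (Fin N → ℕ) × ℕ) :
    (⋀[F]^N (Sym' F d)) ⊗[F] (Sym' F d) :=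
  if ∃ a, p.1 a = p.2 then Fp F d p.1 p.2
  else Fp F d p.1 p.2 + Fp F d (Pmap p).1 (Pmap p).2

/-- The content multiset of a pair. -/
def ssContent {N : ℕ} (p : (Fin N → ℕ) × ℕ) : Multiset ℕ :=
  p.2 ::ₘ Finset.univ.val.map p.1

abbrev Dom (N d : ℕ) : Type _ := (Sym' F (N - 1)) ⊗[F] ↥(⋀[F]^(N + 1) (Sym' F (d + 1)))

/-- The codomain `⋀^N Sym^d E ⊗ Sym^d E` of `φ`. -/
abbrev Cod (N d : ℕ) : Type _ := ↥(⋀[F]^N (Sym' F d)) ⊗[F] (Sym' F d)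

-- === auxiliary lemmas ===

/-- exponent multi-index of the monomial `X^(c-i) Y^i`. -/
def uIdx (c i : ℕ) : Fin 2 →₀ ℕ := Finsupp.single 0 (c - i) + Finsupp.single 1 i

lemma uIdx_apply0 (c i : ℕ) : uIdx c i 0 = c - i := by
  simp [uIdx, Finsupp.single_apply]

lemma uIdx_apply1 (c i : ℕ) : uIdx c i 1 = i := by
  simp [uIdx, Finsupp.single_apply]

lemma degree_fin2 (e : Fin 2 →₀ ℕ) : e.degree = e 0 + e 1 := by
  rw [Finsupp.degree]
  show ∑ i ∈ e.support, e i = e 0 + e 1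
  rw [Finset.sum_subset (Finset.subset_univ e.support)
    (fun x _ hx => Finsupp.notMem_support_iff.mp hx)]
  exact Fin.sum_univ_two e

lemma eq_uIdx_of_degree {c : ℕ} {e : Fin 2 →₀ ℕ} (h : e 0 + e 1 = c) : e = uIdx c (e 1) := by
  ext a
  fin_cases a
  · show e 0 = uIdx c (e 1) 0
    rw [uIdx_apply0]; omega
  · show e 1 = uIdx c (e 1) 1
    rw [uIdx_apply1]

lemma XY_val (F : Type*) [Field F] {c i : ℕ} (h : i ≤ c) :
    ((XY F c i : Sym' F c) : MvPolynomial (Fin 2) F) = MvPolynomial.monomial (uIdx c i) 1 := by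
  rw [XY, dif_pos h]
  simp only [uIdx]
  rw [MvPolynomial.X_pow_eq_monomial, MvPolynomial.X_pow_eq_monomial,
    MvPolynomial.monomial_mul, one_mul]

/-- every element of `Sym' F c` expands in the `XY` monomials. -/
lemma Sym'_expand (F : Type*) [Field F] (c : ℕ) (p : Sym' F c) :
    p = ∑ i ∈ Finset.range (c + 1),
      MvPolynomial.coeff (uIdx c i) (p : MvPolynomial (Fin 2) F) • XY F c i := by
  have hp : MvPolynomial.IsHomogeneous (p : MvPolynomial (Fin 2) F) c :=
    (MvPolynomial.mem_homogeneousSubmodule _ _).mp p.2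
  apply Subtype.ext
  rw [AddSubmonoidClass.coe_finset_sum]
  apply MvPolynomial.ext
  intro e
  rw [MvPolynomial.coeff_sum]
  simp only [SetLike.val_smul, MvPolynomial.coeff_smul]
  by_cases he : e 0 + e 1 = c
  · have heu : e = uIdx c (e 1) := eq_uIdx_of_degree he
    have h1 : e 1 ≤ c := by omega
    rw [Finset.sum_eq_single (e 1)]
    · rw [XY_val F h1, MvPolynomial.coeff_monomial, ← heu, if_pos rfl]
      simp
    · intro i hi hne
      rw [XY_val F (by simpa using Nat.lt_succ_iff.mp (Finset.mem_range.mp hi)),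
        MvPolynomial.coeff_monomial, if_neg, smul_zero]
      intro hcon
      apply hne
      have h2 : uIdx c i 1 = e 1 := by rw [hcon]
      rwa [uIdx_apply1] at h2
    · intro hmem
      exact absurd (Finset.mem_range.mpr (by omega)) hmem
  · rw [hp.coeff_eq_zero (by rw [degree_fin2]; exact he)]
    apply (Finset.sum_eq_zero ?_).symm
    intro i hi
    rw [XY_val F (by simpa using Nat.lt_succ_iff.mp (Finset.mem_range.mp hi)),
      MvPolynomial.coeff_monomial, if_neg, smul_zero]
    intro hcon
    apply he
    rw [← hcon, uIdx_apply0, uIdx_apply1]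
    have : i ≤ c := by simpa using Nat.lt_succ_iff.mp (Finset.mem_range.mp hi)
    omega

lemma wedge_eq_zero (F : Type*) [Field F] (c : ℕ) {r : ℕ} (k : Fin r → ℕ) {a b : Fin r}
    (hab : a ≠ b) (h : k a = k b) : wedge F c k = 0 := by
  apply Subtype.ext
  show ExteriorAlgebra.ιMulti F r (fun a => XY F c (k a)) = 0
  exact AlternatingMap.map_eq_zero_of_eq _ _ (by rw [h]) hab

lemma wedge_perm (F : Type*) [Field F] (c : ℕ) {r : ℕ} (k : Fin r → ℕ) (σ : Equiv.Perm (Fin r)) :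
    wedge F c (k ∘ σ) = ((Equiv.Perm.sign σ : ℤ) • wedge F c k : ⋀[F]^r (Sym' F c)) := by
  apply Subtype.ext
  show ExteriorAlgebra.ιMulti F r (fun a => XY F c (k (σ a))) = _
  have h := AlternatingMap.map_perm (ExteriorAlgebra.ιMulti F r (M := Sym' F c))
    (fun a => XY F c (k a)) σ
  rw [show (fun a => XY F c (k (σ a))) = (fun a => XY F c (k a)) ∘ σ from rfl, h,
    Units.smul_def]
  rfl

lemma iMulti_expand (F : Type*) [Field F] (c r : ℕ) (v : Fin r → Sym' F c) :
    ExteriorAlgebra.ιMulti F r v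
      = ∑ t ∈ Fintype.piFinset (fun _ : Fin r => Finset.range (c + 1)),
          (∏ a, MvPolynomial.coeff (uIdx c (t a)) (v a : MvPolynomial (Fin 2) F))
            • ExteriorAlgebra.ιMulti F r (fun a => XY F c (t a)) := by
  have h2 : v = fun a => ∑ i ∈ Finset.range (c + 1),
      MvPolynomial.coeff (uIdx c i) ((v a) : MvPolynomial (Fin 2) F) • XY F c i :=
    funext fun a => Sym'_expand F c (v a)
  conv_lhs => rw [h2]
  rw [show (ExteriorAlgebra.ιMulti F r) (fun a => ∑ i ∈ Finset.range (c + 1),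
      MvPolynomial.coeff (uIdx c i) ((v a) : MvPolynomial (Fin 2) F) • XY F c i)
    = (ExteriorAlgebra.ιMulti F r).toMultilinearMap (fun a => ∑ i ∈ Finset.range (c + 1),
      MvPolynomial.coeff (uIdx c i) ((v a) : MvPolynomial (Fin 2) F) • XY F c i) from rfl,
    MultilinearMap.map_sum_finset]
  apply Finset.sum_congr rfl
  intro t _
  rw [MultilinearMap.map_smul_univ]
  rfl

lemma mem_span_XY (F : Type*) [Field F] (c : ℕ) (p : Sym' F c) :
    p ∈ Submodule.span F {q | ∃ i ≤ c, q = XY F c i} := by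
  rw [Sym'_expand F c p]
  apply Submodule.sum_mem
  intro i hi
  exact Submodule.smul_mem _ _
    (Submodule.subset_span ⟨i, by simpa [Nat.lt_succ_iff] using hi, rfl⟩)

lemma mem_span_wedge (F : Type*) [Field F] (c r : ℕ) (x : ⋀[F]^r (Sym' F c)) :
    x ∈ Submodule.span F {w | ∃ k : Fin r → ℕ, (∀ a, k a ≤ c) ∧ w = wedge F c k} := by
  have hval : (x : ExteriorAlgebra F (Sym' F c))
      ∈ Submodule.span F (Set.range (ExteriorAlgebra.ιMulti F r)) := by
    rw [ExteriorAlgebra.ιMulti_span_fixedDegree]; exact x.2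
  have hle : Submodule.span F (Set.range (ExteriorAlgebra.ιMulti F r))
      ≤ Submodule.map (⋀[F]^r (Sym' F c)).subtype
        (Submodule.span F {w | ∃ k : Fin r → ℕ, (∀ a, k a ≤ c) ∧ w = wedge F c k}) := by
    rw [Submodule.span_le]
    rintro _ ⟨v, rfl⟩
    refine ⟨∑ t ∈ Fintype.piFinset (fun _ : Fin r => Finset.range (c + 1)),
      (∏ a, MvPolynomial.coeff (uIdx c (t a)) ((v a) : MvPolynomial (Fin 2) F))
        • wedge F c t, ?_, ?_⟩
    · apply Submodule.sum_mem
      intro t ht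
      refine Submodule.smul_mem _ _ (Submodule.subset_span ⟨t, fun a => ?_, rfl⟩)
      have := (Fintype.mem_piFinset.mp ht) a
      simpa [Nat.lt_succ_iff] using this
    · rw [map_sum, iMulti_expand F c r v]
      apply Finset.sum_congr rfl
      intro t _
      rw [map_smul]
      rfl
  obtain ⟨y, hy, hyx⟩ := hle hval
  rwa [← Subtype.ext hyx]
lemma mem_box {N : ℕ} {k : Fin (N + 1) → ℕ} {m : Fin N → ℕ} :
    m ∈ box k ↔ ∀ a : Fin N, k a.castSucc ≤ m a ∧ m a < k a.succ := by
  simp [box, Fintype.mem_piFinset, Finset.mem_Ico]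

lemma box_sum_lb {N : ℕ} {k : Fin (N + 1) → ℕ} {m : Fin N → ℕ} (hm : m ∈ box k) :
    (∑ a, m a) + N + k 0 ≤ ∑ α, k α := by
  have h1 : ∀ a : Fin N, m a + 1 ≤ k a.succ := fun a => (mem_box.mp hm a).2
  have h2 : (∑ a : Fin N, m a) + N = ∑ a : Fin N, (m a + 1) := by
    rw [Finset.sum_add_distrib, Finset.sum_const, Finset.card_univ]; simp
  have h3 : (∑ a : Fin N, (m a + 1)) ≤ ∑ a : Fin N, k a.succ :=
    Finset.sum_le_sum (fun a _ => h1 a)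
  have h4 : ∑ α, k α = k 0 + ∑ a : Fin N, k a.succ := Fin.sum_univ_succ k
  omega

lemma box_sum_ub {N : ℕ} {k : Fin (N + 1) → ℕ} {m : Fin N → ℕ} (hm : m ∈ box k) :
    (∑ α, k α) ≤ (∑ a, m a) + k (Fin.last N) := by
  have h1 : ∀ a : Fin N, k a.castSucc ≤ m a := fun a => (mem_box.mp hm a).1
  have h3 : (∑ a : Fin N, k a.castSucc) ≤ ∑ a : Fin N, m a :=
    Finset.sum_le_sum (fun a _ => h1 a)
  have h4 : ∑ α, k α = (∑ a : Fin N, k a.castSucc) + k (Fin.last N) :=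
    Fin.sum_univ_castSucc k
  omega

lemma box_entry_le {N d : ℕ} {k : Fin (N + 1) → ℕ} {m : Fin N → ℕ} (hm : m ∈ box k)
    (hkd : ∀ α, k α ≤ d + 1) (a : Fin N) : m a ≤ d := by
  have h1 := (mem_box.mp hm a).2
  have h2 := hkd a.succ
  omega

lemma box_subset_S {N d : ℕ} {k : Fin (N + 1) → ℕ} (hkd : ∀ α, k α ≤ d + 1) :
    box k ⊆ Fintype.piFinset (fun _ : Fin N => Finset.range (d + 1)) := by
  intro m hm
  rw [Fintype.mem_piFinset]
  intro a
  rw [Finset.mem_range, Nat.lt_succ_iff]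
  exact box_entry_le hm hkd a

lemma sum_ite_mem_subset {ι M : Type*} [AddCommMonoid M] [DecidableEq ι] {B S : Finset ι}
    (h : B ⊆ S) (f : ι → M) :
    (∑ m ∈ S, if m ∈ B then f m else 0) = ∑ m ∈ B, f m := by
  rw [Finset.sum_ite_mem, Finset.inter_eq_right.mpr h]

lemma coeff_smul_ite {M : Type*} [AddCommGroup M] [Module ℂ M] (c : ℕ) (P : Prop)
    [Decidable P] (x : M) :
    ((c * if P then 1 else 0 : ℕ) : ℂ) • x = (if P then (c : ℂ) • x else 0) := by
  split_ifs <;> simp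
lemma key {N : ℕ} (k : Fin (N + 1) → ℕ) (hk : StrictMono k) (m : Fin N → ℕ)
    (hinj : Function.Injective m) :
    (∑ α : Fin (N + 1), k α * (if m ∈ box (Function.update k α (k α - 1)) then 1 else 0))
      = (∑ β : Fin N, (m β + 1) *
          (if Function.update m β (m β + 1) ∈ box k then 1 else 0))
        + ((∑ α, k α) - N - ∑ a, m a) * (if m ∈ box k then 1 else 0) := by
  by_cases hB : m ∈ box k
  · -- Case A
    have hm := mem_box.mp hB
    have hsucc_pos : ∀ β : Fin N, 1 ≤ k β.succ := fun β =>
      Nat.one_le_iff_ne_zero.mpr (fun h => by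
        have := hk (Fin.castSucc_lt_succ : β.castSucc < β.succ); omega)
    have hchiL : ∀ β : Fin N,
        (if m ∈ box (Function.update k β.succ (k β.succ - 1)) then 1 else 0)
          = (if m β + 2 ≤ k β.succ then 1 else 0) := by
      intro β
      congr 1
      rw [eq_iff_iff, mem_box]
      constructor
      · intro h
        have := (h β).2
        rw [Function.update_self] at this
        have := hsucc_pos β
        omega
      · intro h a
        rw [Function.update_apply, Function.update_apply]
        constructor
        · by_cases hc : a.castSucc = β.succ
          · rw [if_pos hc]
            have := (hm a).1
            rw [hc] at this
            omega
          · rw [if_neg hc]; exact (hm a).1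
        · by_cases hc : a.succ = β.succ
          · rw [if_pos hc]
            have : a = β := Fin.succ_injective _ hc
            subst this; omega
          · rw [if_neg hc]; exact (hm a).2
    have hchiR : ∀ β : Fin N,
        (if Function.update m β (m β + 1) ∈ box k then 1 else 0)
          = (if m β + 2 ≤ k β.succ then 1 else 0) := by
      intro β
      congr 1
      rw [eq_iff_iff, mem_box]
      constructor
      · intro h
        have := (h β).2
        rw [Function.update_self] at this
        omega
      · intro h a
        rw [Function.update_apply]
        by_cases hc : a = β
        · subst hc; rw [if_pos rfl]
          refine ⟨le_trans (hm a).1 (by omega), by omega⟩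
        · rw [if_neg hc]; exact hm a
    rw [Fin.sum_univ_succ]
    have h0 : (if m ∈ box (Function.update k 0 (k 0 - 1)) then 1 else 0) = 1 := by
      rw [if_pos]
      rw [mem_box]
      intro a
      rw [Function.update_apply, Function.update_apply]
      constructor
      · by_cases hc : a.castSucc = 0
        · rw [if_pos hc]
          have := (hm a).1; rw [hc] at this; omega
        · rw [if_neg hc]; exact (hm a).1
      · have hc : a.succ ≠ 0 := Fin.succ_ne_zero a
        rw [if_neg hc]; exact (hm a).2
    rw [h0, if_pos hB]
    simp only [hchiL, hchiR]
    have hterm : ∀ β : Fin N,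
        k β.succ * (if m β + 2 ≤ k β.succ then 1 else 0) + (m β + 1)
          = (m β + 1) * (if m β + 2 ≤ k β.succ then 1 else 0) + k β.succ := by
      intro β
      have h1 := (hm β).1
      have h2 := (hm β).2
      by_cases hc : m β + 2 ≤ k β.succ
      · rw [if_pos hc]; ring
      · rw [if_neg hc]; omega
    have hsum : (∑ β : Fin N, (k β.succ * (if m β + 2 ≤ k β.succ then 1 else 0)))
          + ((∑ β : Fin N, m β) + N)
        = (∑ β : Fin N, (m β + 1) * (if m β + 2 ≤ k β.succ then 1 else 0))
          + ∑ β : Fin N, k β.succ := by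
      have h := Finset.sum_congr rfl (fun β (_ : β ∈ Finset.univ) => hterm β)
      rw [Finset.sum_add_distrib, Finset.sum_add_distrib, Finset.sum_add_distrib,
        Finset.sum_const, Finset.card_univ] at h
      simpa using h
    have hle : (∑ β : Fin N, m β) + N ≤ ∑ β : Fin N, k β.succ := by
      calc (∑ β : Fin N, m β) + N = ∑ β : Fin N, (m β + 1) := by
            rw [Finset.sum_add_distrib, Finset.sum_const, Finset.card_univ]
            simp
        _ ≤ ∑ β : Fin N, k β.succ := Finset.sum_le_sum (fun β _ => (hm β).2)
    have hkk : ∑ α, k α = k 0 + ∑ β : Fin N, k β.succ := Fin.sum_univ_succ k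
    rw [hkk]
    omega
  · -- Case B
    rw [if_neg hB, mul_zero, add_zero]
    by_cases hb : ∃ b : Fin N, Function.update m b (m b + 1) ∈ box k
    · obtain ⟨b, hbB⟩ := hb
      have hbm := mem_box.mp hbB
      have hPa : ∀ a : Fin N, a ≠ b → k a.castSucc ≤ m a ∧ m a < k a.succ := by
        intro a ha
        have := hbm a
        rwa [Function.update_apply, if_neg ha] at this
      have hbval : m b + 1 = k b.castSucc := by
        have h1 := hbm b
        rw [Function.update_self] at h1
        by_contra hne
        apply hB
        rw [mem_box]
        intro a
        by_cases hc : a = b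
        · subst hc; exact ⟨by omega, by omega⟩
        · exact hPa a hc
      have hRHS : (∑ β : Fin N, (m β + 1) *
          (if Function.update m β (m β + 1) ∈ box k then 1 else 0)) = m b + 1 := by
        rw [Finset.sum_eq_single b]
        · rw [if_pos hbB, mul_one]
        · intro β _ hβ
          rw [if_neg, mul_zero]
          intro hmem
          have hthis := (mem_box.mp hmem) b
          rw [Function.update_apply, if_neg (Ne.symm hβ)] at hthis
          exact hB (mem_box.mpr fun a => by
            by_cases hc : a = b
            · subst hc; exact hthis
            · exact hPa a hc)
        · simp
      have hLHS : (∑ α : Fin (N + 1),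
          k α * (if m ∈ box (Function.update k α (k α - 1)) then 1 else 0))
            = k b.castSucc := by
        rw [Finset.sum_eq_single b.castSucc]
        · rw [if_pos, mul_one]
          rw [mem_box]
          intro a
          rw [Function.update_apply, Function.update_apply]
          by_cases hc : a = b
          · subst hc
            have hcs : a.succ ≠ a.castSucc := by
              intro hcon
              have := congrArg Fin.val hcon
              simp [Fin.val_succ] at this
            rw [if_pos rfl, if_neg hcs]
            constructor
            · omega
            · have h5 : m a < k a.castSucc := by omega
              exact lt_trans h5 (hk (Fin.castSucc_lt_succ : a.castSucc < a.succ))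
          · constructor
            · rw [if_neg (fun h => hc (Fin.castSucc_injective _ h))]
              exact (hPa a hc).1
            · by_cases hs : a.succ = b.castSucc
              · rw [if_pos hs]
                have h1 := (hPa a hc).2
                rw [hs] at h1
                have hne : m a ≠ m b := fun h => hc (hinj h)
                omega
              · rw [if_neg hs]; exact (hPa a hc).2
        · intro α _ hα
          rw [if_neg, mul_zero]
          intro hmem
          have hthis := (mem_box.mp hmem) b
          rw [Function.update_apply, Function.update_apply,
            if_neg (fun h => hα (h.symm))] at hthis
          rcases hthis with ⟨h1, _⟩
          omega
        · simp
      rw [hLHS, hRHS]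
      omega
    · push_neg at hb
      have hR0 : (∑ β : Fin N, (m β + 1) *
          (if Function.update m β (m β + 1) ∈ box k then 1 else 0)) = 0 :=
        Finset.sum_eq_zero fun β _ => by rw [if_neg (hb β), mul_zero]
      have hL0 : (∑ α : Fin (N + 1),
          k α * (if m ∈ box (Function.update k α (k α - 1)) then 1 else 0)) = 0 := by
        apply Finset.sum_eq_zero
        intro α _
        rw [if_neg, mul_zero]
        intro hmem
        have hmem' := mem_box.mp hmem
        obtain ⟨a, ha⟩ : ∃ a : Fin N, ¬(k a.castSucc ≤ m a ∧ m a < k a.succ) := by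
          by_contra h
          push_neg at h
          exact hB (mem_box.mpr fun a => ⟨(h a).1, (h a).2⟩)
        have hma := hmem' a
        rw [Function.update_apply, Function.update_apply] at hma
        by_cases hc : a.castSucc = α
        · have hcs : a.succ ≠ α := by
            rw [← hc]
            intro hcon
            have := congrArg Fin.val hcon
            simp [Fin.val_succ] at this
          rw [if_pos hc, if_neg hcs] at hma
          have h5 : m a < k a.castSucc := by
            by_contra h6
            exact ha ⟨by omega, hma.2⟩
          rw [hc] at h5
          have hval : m a + 1 = k α := by omega
          apply hb a
          rw [mem_box]
          intro c
          rw [Function.update_apply]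
          by_cases hcc : c = a
          · subst hcc
            rw [if_pos rfl]
            constructor
            · rw [hc]; omega
            · rw [hval, ← hc]
              exact hk (Fin.castSucc_lt_succ : c.castSucc < c.succ)
          · rw [if_neg hcc]
            have hmc := hmem' c
            rw [Function.update_apply, Function.update_apply] at hmc
            have hc1 : c.castSucc ≠ α := fun h => hcc (Fin.castSucc_injective _ (h.trans hc.symm))
            rw [if_neg hc1] at hmc
            by_cases hc2 : c.succ = α
            · rw [if_pos hc2] at hmc
              refine ⟨hmc.1, ?_⟩
              rw [hc2]
              omega
            · rw [if_neg hc2] at hmc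
              exact hmc
        · rw [if_neg hc] at hma
          by_cases hs : a.succ = α
          · rw [if_pos hs] at hma
            refine ha ⟨hma.1, ?_⟩
            rw [hs]
            omega
          · rw [if_neg hs] at hma
            exact ha hma
      rw [hL0, hR0]

lemma pieceA (d N s : ℕ) {k : Fin (N + 1) → ℕ} (hkd : ∀ α, k α ≤ d + 1) :
    (s : ℂ) • vv ℂ d N (s - 1) k
      = ∑ m ∈ Fintype.piFinset (fun _ : Fin N => Finset.range (d + 1)),
          ((s * if m ∈ box k then 1 else 0 : ℕ) : ℂ)
            • Fp ℂ d m (s + (∑ α, k α) - N - (∑ a, m a) - 1) := by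
  calc (s : ℂ) • vv ℂ d N (s - 1) k
      = ∑ i ∈ box k, (s : ℂ) • Fp ℂ d i (s + (∑ α, k α) - N - (∑ a, i a) - 1) := by
        rw [vv, Finset.smul_sum]
        apply Finset.sum_congr rfl
        intro i hi
        rcases Nat.eq_zero_or_pos s with hs | hs
        · subst hs; simp
        · have hlb := box_sum_lb hi
          have h : s - 1 + (∑ α, k α) - N - (∑ a, i a)
              = s + (∑ α, k α) - N - (∑ a, i a) - 1 := by omega
          rw [h]
    _ = ∑ m ∈ Fintype.piFinset (fun _ : Fin N => Finset.range (d + 1)),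
          (if m ∈ box k then (s : ℂ) • Fp ℂ d m (s + (∑ α, k α) - N - (∑ a, m a) - 1)
           else 0) := (sum_ite_mem_subset (box_subset_S hkd) _).symm
    _ = _ := Finset.sum_congr rfl fun m _ => by split_ifs <;> simp

lemma pieceB (d N s : ℕ) {k : Fin (N + 1) → ℕ} (hkd : ∀ α, k α ≤ d + 1) (α : Fin (N + 1)) :
    (k α : ℂ) • vv ℂ d N s (Function.update k α (k α - 1))
      = ∑ m ∈ Fintype.piFinset (fun _ : Fin N => Finset.range (d + 1)),
          ((k α * if m ∈ box (Function.update k α (k α - 1)) then 1 else 0 : ℕ) : ℂ)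
            • Fp ℂ d m (s + (∑ γ, k γ) - N - (∑ a, m a) - 1) := by
  have hkd' : ∀ γ, Function.update k α (k α - 1) γ ≤ d + 1 := by
    intro γ
    rw [Function.update_apply]
    split_ifs
    · have := hkd α; omega
    · exact hkd γ
  calc (k α : ℂ) • vv ℂ d N s (Function.update k α (k α - 1))
      = ∑ i ∈ box (Function.update k α (k α - 1)),
          (k α : ℂ) • Fp ℂ d i (s + (∑ γ, k γ) - N - (∑ a, i a) - 1) := by
        rw [vv, Finset.smul_sum]
        rcases Nat.eq_zero_or_pos (k α) with h0 | h0
        · apply Finset.sum_congr rfl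
          intro i hi
          rw [h0]
          simp
        · have hupd : (∑ γ, Function.update k α (k α - 1) γ) = (∑ γ, k γ) - 1 := by
            rw [Finset.sum_update_of_mem (Finset.mem_univ α)]
            have h5 : (∑ γ, k γ) = k α + ∑ γ ∈ Finset.univ \ {α}, k γ :=
              Finset.sum_eq_add_sum_sdiff_singleton_of_mem (Finset.mem_univ α) k
            omega
          apply Finset.sum_congr rfl
          intro i hi
          have hlb := box_sum_lb hi
          rw [hupd] at hlb
          have h : s + (∑ γ, Function.update k α (k α - 1) γ) - N - (∑ a, i a)
              = s + (∑ γ, k γ) - N - (∑ a, i a) - 1 := by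
            have h6 : k α ≤ ∑ γ, k γ :=
              Finset.single_le_sum (f := k) (fun γ _ => Nat.zero_le _) (Finset.mem_univ α)
            rw [hupd]; omega
          rw [h]
    _ = ∑ m ∈ Fintype.piFinset (fun _ : Fin N => Finset.range (d + 1)),
          (if m ∈ box (Function.update k α (k α - 1)) then
            (k α : ℂ) • Fp ℂ d m (s + (∑ γ, k γ) - N - (∑ a, m a) - 1)
           else 0) := (sum_ite_mem_subset (box_subset_S hkd') _).symm
    _ = _ := Finset.sum_congr rfl fun m _ => by split_ifs <;> simp

lemma pieceC (d N s : ℕ) {k : Fin (N + 1) → ℕ} (hkd : ∀ α, k α ≤ d + 1) :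
    (∑ i ∈ box k, ((s + (∑ α, k α) - N - (∑ a, i a) : ℕ) : ℂ)
        • Fp ℂ d i (s + (∑ α, k α) - N - (∑ a, i a) - 1))
      = ∑ m ∈ Fintype.piFinset (fun _ : Fin N => Finset.range (d + 1)),
          (((s + (∑ α, k α) - N - (∑ a, m a)) * if m ∈ box k then 1 else 0 : ℕ) : ℂ)
            • Fp ℂ d m (s + (∑ α, k α) - N - (∑ a, m a) - 1) := by
  calc (∑ i ∈ box k, ((s + (∑ α, k α) - N - (∑ a, i a) : ℕ) : ℂ)
        • Fp ℂ d i (s + (∑ α, k α) - N - (∑ a, i a) - 1))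
      = ∑ m ∈ Fintype.piFinset (fun _ : Fin N => Finset.range (d + 1)),
          (if m ∈ box k then ((s + (∑ α, k α) - N - (∑ a, m a) : ℕ) : ℂ)
              • Fp ℂ d m (s + (∑ α, k α) - N - (∑ a, m a) - 1)
           else 0) := (sum_ite_mem_subset (box_subset_S hkd) _).symm
    _ = _ := Finset.sum_congr rfl fun m _ => by split_ifs <;> simp

lemma pieceD (d N s : ℕ) {k : Fin (N + 1) → ℕ} (hkd : ∀ α, k α ≤ d + 1) (β : Fin N) :
    (∑ i ∈ box k, (i β : ℂ)
        • Fp ℂ d (Function.update i β (i β - 1)) (s + (∑ α, k α) - N - (∑ a, i a)))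
      = ∑ m ∈ Fintype.piFinset (fun _ : Fin N => Finset.range (d + 1)),
          (((m β + 1) * if Function.update m β (m β + 1) ∈ box k then 1 else 0 : ℕ) : ℂ)
            • Fp ℂ d m (s + (∑ α, k α) - N - (∑ a, m a) - 1) := by
  calc (∑ i ∈ box k, (i β : ℂ)
        • Fp ℂ d (Function.update i β (i β - 1)) (s + (∑ α, k α) - N - (∑ a, i a)))
      = ∑ i ∈ (box k).filter (fun i => i β ≠ 0), (i β : ℂ)
          • Fp ℂ d (Function.update i β (i β - 1)) (s + (∑ α, k α) - N - (∑ a, i a)) := by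
        refine (Finset.sum_filter_of_ne ?_).symm
        intro i _ hne h0
        apply hne
        rw [h0]
        simp
    _ = ∑ m ∈ (Fintype.piFinset (fun _ : Fin N => Finset.range (d + 1))).filter
            (fun m => Function.update m β (m β + 1) ∈ box k),
          ((m β + 1 : ℕ) : ℂ) • Fp ℂ d m (s + (∑ α, k α) - N - (∑ a, m a) - 1) := by
        refine Finset.sum_bij' (fun i _ => Function.update i β (i β - 1))
          (fun m _ => Function.update m β (m β + 1)) ?_ ?_ ?_ ?_ ?_
        · intro i hi
          rw [Finset.mem_filter] at hi ⊢
          obtain ⟨hiB, hiβ⟩ := hi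
          constructor
          · rw [Fintype.mem_piFinset]
            intro a
            rw [Function.update_apply, Finset.mem_range, Nat.lt_succ_iff]
            split_ifs
            · have := box_entry_le hiB hkd β; omega
            · exact box_entry_le hiB hkd a
          · have h1 : Function.update (Function.update i β (i β - 1)) β
                (Function.update i β (i β - 1) β + 1) = i := by
              rw [Function.update_idem, Function.update_self]
              have : i β - 1 + 1 = i β := by omega
              rw [this, Function.update_eq_self]
            rw [h1]
            exact hiB
        · intro m hm
          rw [Finset.mem_filter] at hm ⊢
          obtain ⟨hmS, hmB⟩ := hm
          refine ⟨hmB, ?_⟩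
          rw [Function.update_self]
          omega
        · intro i hi
          rw [Finset.mem_filter] at hi
          rw [Function.update_self, Function.update_idem]
          have : i β - 1 + 1 = i β := by omega
          rw [this, Function.update_eq_self]
        · intro m hm
          rw [Function.update_self, Function.update_idem]
          have : m β + 1 - 1 = m β := by omega
          rw [this, Function.update_eq_self]
        · intro i hi
          rw [Finset.mem_filter] at hi
          obtain ⟨hiB, hiβ⟩ := hi
          have hlb := box_sum_lb hiB
          have hs1 : Function.update i β (i β - 1) β + 1 = i β := by
            rw [Function.update_self]; omega
          have hs2 : (∑ a, Function.update i β (i β - 1) a) = (∑ a, i a) - 1 := by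
            rw [Finset.sum_update_of_mem (Finset.mem_univ β)]
            have h5 : (∑ a, i a) = i β + ∑ a ∈ Finset.univ \ {β}, i a :=
              Finset.sum_eq_add_sum_sdiff_singleton_of_mem (Finset.mem_univ β) i
            omega
          have hsum_pos : 1 ≤ ∑ a, i a := by
            have : i β ≤ ∑ a, i a := Finset.single_le_sum (f := fun a => i a)
              (fun a _ => Nat.zero_le _) (Finset.mem_univ β)
            omega
          have h3 : s + (∑ α, k α) - N - (∑ a, Function.update i β (i β - 1) a) - 1
              = s + (∑ α, k α) - N - (∑ a, i a) := by
            rw [hs2]; omega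
          rw [hs1, h3]
    _ = ∑ m ∈ Fintype.piFinset (fun _ : Fin N => Finset.range (d + 1)),
          (if Function.update m β (m β + 1) ∈ box k then
            ((m β + 1 : ℕ) : ℂ) • Fp ℂ d m (s + (∑ α, k α) - N - (∑ a, m a) - 1)
           else 0) := by
        rw [Finset.sum_filter]
    _ = _ := Finset.sum_congr rfl fun m _ => by split_ifs <;> simp

lemma pointwise (d N s : ℕ) {k : Fin (N + 1) → ℕ} (hk : StrictMono k) (m : Fin N → ℕ) :
    ((s * (if m ∈ box k then 1 else 0)
        + ∑ α : Fin (N + 1), k α * (if m ∈ box (Function.update k α (k α - 1)) then 1 else 0)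
        : ℕ) : ℂ) • Fp ℂ d m (s + (∑ α, k α) - N - (∑ a, m a) - 1)
      = (((∑ β : Fin N, (m β + 1) * (if Function.update m β (m β + 1) ∈ box k then 1 else 0))
          + (s + (∑ α, k α) - N - (∑ a, m a)) * (if m ∈ box k then 1 else 0)
        : ℕ) : ℂ) • Fp ℂ d m (s + (∑ α, k α) - N - (∑ a, m a) - 1) := by
  by_cases hinj : Function.Injective m
  · have hkey := key k hk m hinj
    congr 1
    norm_cast
    by_cases hB : m ∈ box k
    · have hlb := box_sum_lb hB
      simp only [if_pos hB, mul_one] at hkey ⊢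
      omega
    · simp only [if_neg hB, mul_zero, add_zero, zero_add] at hkey ⊢
      exact hkey
  · obtain ⟨a, b, hab, hmab⟩ : ∃ a b, a ≠ b ∧ m a = m b := by
      rw [Function.Injective] at hinj
      push_neg at hinj
      obtain ⟨a, b, h1, h2⟩ := hinj
      exact ⟨a, b, h2, h1⟩
    have hz : wedge ℂ d m = 0 := wedge_eq_zero ℂ d m hab hmab
    have hG : Fp ℂ d m (s + (∑ α, k α) - N - (∑ a, m a) - 1) = 0 := by
      unfold Fp
      rw [hz, TensorProduct.zero_tmul]
    rw [hG, smul_zero, smul_zero]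

lemma lemmaA (d N s : ℕ) {k : Fin (N + 1) → ℕ} (hk : StrictMono k)
    (hkd : ∀ α, k α ≤ d + 1) :
    (s : ℂ) • vv ℂ d N (s - 1) k
      + ∑ α : Fin (N + 1), (k α : ℂ) • vv ℂ d N s (Function.update k α (k α - 1))
    = (∑ i ∈ box k, ∑ β : Fin N, (i β : ℂ)
          • Fp ℂ d (Function.update i β (i β - 1)) (s + (∑ α, k α) - N - ∑ a, i a))
      + ∑ i ∈ box k, ((s + (∑ α, k α) - N - (∑ a, i a) : ℕ) : ℂ)
          • Fp ℂ d i (s + (∑ α, k α) - N - (∑ a, i a) - 1) := by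
  calc (s : ℂ) • vv ℂ d N (s - 1) k
      + ∑ α : Fin (N + 1), (k α : ℂ) • vv ℂ d N s (Function.update k α (k α - 1))
      = ∑ m ∈ Fintype.piFinset (fun _ : Fin N => Finset.range (d + 1)),
          ((s * (if m ∈ box k then 1 else 0)
            + ∑ α : Fin (N + 1), k α *
                (if m ∈ box (Function.update k α (k α - 1)) then 1 else 0) : ℕ) : ℂ)
            • Fp ℂ d m (s + (∑ α, k α) - N - (∑ a, m a) - 1) := by
        rw [pieceA d N s hkd]
        have h2 : (∑ α : Fin (N + 1), (k α : ℂ) • vv ℂ d N s (Function.update k α (k α - 1)))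
            = ∑ α : Fin (N + 1), ∑ m ∈ Fintype.piFinset (fun _ : Fin N => Finset.range (d + 1)),
                ((k α * if m ∈ box (Function.update k α (k α - 1)) then 1 else 0 : ℕ) : ℂ)
                  • Fp ℂ d m (s + (∑ γ, k γ) - N - (∑ a, m a) - 1) :=
          Finset.sum_congr rfl (fun α _ => pieceB d N s hkd α)
        rw [h2, Finset.sum_comm, ← Finset.sum_add_distrib]
        refine Finset.sum_congr rfl fun m _ => ?_
        rw [Nat.cast_add, add_smul, Nat.cast_sum, Finset.sum_smul]
    _ = ∑ m ∈ Fintype.piFinset (fun _ : Fin N => Finset.range (d + 1)),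
          (((∑ β : Fin N, (m β + 1) *
              (if Function.update m β (m β + 1) ∈ box k then 1 else 0))
            + (s + (∑ α, k α) - N - (∑ a, m a)) * (if m ∈ box k then 1 else 0) : ℕ) : ℂ)
            • Fp ℂ d m (s + (∑ α, k α) - N - (∑ a, m a) - 1) :=
        Finset.sum_congr rfl fun m _ => pointwise d N s hk m
    _ = (∑ i ∈ box k, ∑ β : Fin N, (i β : ℂ)
          • Fp ℂ d (Function.update i β (i β - 1)) (s + (∑ α, k α) - N - ∑ a, i a))
      + ∑ i ∈ box k, ((s + (∑ α, k α) - N - (∑ a, i a) : ℕ) : ℂ)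
          • Fp ℂ d i (s + (∑ α, k α) - N - (∑ a, i a) - 1) := by
        have h3 : (∑ i ∈ box k, ∑ β : Fin N, (i β : ℂ)
            • Fp ℂ d (Function.update i β (i β - 1)) (s + (∑ α, k α) - N - ∑ a, i a))
          = ∑ β : Fin N, ∑ m ∈ Fintype.piFinset (fun _ : Fin N => Finset.range (d + 1)),
              (((m β + 1) * if Function.update m β (m β + 1) ∈ box k then 1 else 0 : ℕ) : ℂ)
                • Fp ℂ d m (s + (∑ α, k α) - N - (∑ a, m a) - 1) := by
          rw [Finset.sum_comm]
          exact Finset.sum_congr rfl fun β _ => pieceD d N s hkd β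
        rw [h3, pieceC d N s hkd, Finset.sum_comm, ← Finset.sum_add_distrib]
        refine Finset.sum_congr rfl fun m _ => ?_
        rw [Nat.cast_add, add_smul, Nat.cast_sum, Finset.sum_smul]

lemma vv_update_zero (d N s : ℕ) {k : Fin (N + 1) → ℕ} {β : Fin N}
    (h : k β.castSucc = k β.succ - 1) :
    vv ℂ d N s (Function.update k β.succ (k β.succ - 1)) = 0 := by
  rw [vv]
  have hbox : box (Function.update k β.succ (k β.succ - 1)) = ∅ := by
    apply Finset.eq_empty_of_forall_notMem
    intro m hm
    have h2 := mem_box.mp hm β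
    have hcs : β.castSucc ≠ β.succ := ne_of_lt (Fin.castSucc_lt_succ : β.castSucc < β.succ)
    rw [Function.update_apply, Function.update_apply, if_neg hcs, if_pos rfl] at h2
    omega
  rw [hbox, Finset.sum_empty]

lemma wedge_update_zero (c N : ℕ) {k : Fin (N + 1) → ℕ} {β : Fin N}
    (h : k β.castSucc = k β.succ - 1) :
    wedge ℂ c (Function.update k β.succ (k β.succ - 1)) = 0 := by
  have hcs : β.castSucc ≠ β.succ := ne_of_lt (Fin.castSucc_lt_succ : β.castSucc < β.succ)
  apply wedge_eq_zero ℂ c _ hcs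
  rw [Function.update_apply, Function.update_apply, if_neg hcs, if_pos rfl, h]

lemma update_strictMono_zero {N : ℕ} {k : Fin (N + 1) → ℕ} (hk : StrictMono k)
    (h1 : 1 ≤ k 0) : StrictMono (Function.update k 0 (k 0 - 1)) := by
  intro x y hxy
  rw [Function.update_apply, Function.update_apply]
  rcases eq_or_ne x 0 with rfl | hx
  · rw [if_pos rfl, if_neg (ne_of_gt hxy)]
    have := hk hxy
    omega
  · have hy : y ≠ 0 := by
      intro hy0
      subst hy0
      exact absurd hxy (by simp [Fin.lt_iff_val_lt_val, Fin.val_zero])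
    rw [if_neg hx, if_neg hy]
    exact hk hxy

lemma update_strictMono_succ {N : ℕ} {k : Fin (N + 1) → ℕ} (hk : StrictMono k) {β : Fin N}
    (hlt : k β.castSucc < k β.succ - 1) :
    StrictMono (Function.update k β.succ (k β.succ - 1)) := by
  intro x y hxy
  rw [Function.update_apply, Function.update_apply]
  rcases eq_or_ne x β.succ with rfl | hx
  · rw [if_pos rfl, if_neg (ne_of_gt hxy)]
    have := hk hxy
    omega
  · rw [if_neg hx]
    rcases eq_or_ne y β.succ with rfl | hy
    · rw [if_pos rfl]
      have hxle : x ≤ β.castSucc := Fin.le_castSucc_iff.mpr hxy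
      have := hk.monotone hxle
      omega
    · rw [if_neg hy]
      exact hk hxy

set_option maxHeartbeats 4000000 in
/-- Lemma 2.9 of the paper. Over `ℂ`, the map `φ` commutes with the action of
the Lie algebra element `e ∈ sl₂(ℂ)` (which acts on `Sym^c E` by `X ∂/∂Y` and on tensor and
exterior products by the derivation rule). -/
theorem statement10 (N d : ℕ) (hN : 0 < N)
    (eS : Sym' ℂ (N - 1) →ₗ[ℂ] Sym' ℂ (N - 1))
    (heS : ∀ s ≤ N - 1, eS (XY ℂ (N - 1) s) = (s : ℂ) • XY ℂ (N - 1) (s - 1))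
    (eW : ↥(⋀[ℂ]^(N + 1) (Sym' ℂ (d + 1))) →ₗ[ℂ] ↥(⋀[ℂ]^(N + 1) (Sym' ℂ (d + 1))))
    (heW : ∀ k : Fin (N + 1) → ℕ, (∀ a, k a ≤ d + 1) →
      eW (wedge ℂ (d + 1) k) =
        ∑ α, (k α : ℂ) • wedge ℂ (d + 1) (Function.update k α (k α - 1)))
    (eV : ↥(⋀[ℂ]^N (Sym' ℂ d)) →ₗ[ℂ] ↥(⋀[ℂ]^N (Sym' ℂ d)))
    (heV : ∀ k : Fin N → ℕ, (∀ a, k a ≤ d) →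
      eV (wedge ℂ d k) = ∑ α, (k α : ℂ) • wedge ℂ d (Function.update k α (k α - 1)))
    (eSd : Sym' ℂ d →ₗ[ℂ] Sym' ℂ d)
    (heSd : ∀ j ≤ d, eSd (XY ℂ d j) = (j : ℂ) • XY ℂ d (j - 1))
    (φ : Dom ℂ N d →ₗ[ℂ] Cod ℂ N d)
    (hφ : ∀ s < N, ∀ k : Fin (N + 1) → ℕ, StrictMono k → (∀ a, k a ≤ d + 1) →
      φ (XY ℂ (N - 1) s ⊗ₜ[ℂ] wedge ℂ (d + 1) k) = vv ℂ d N s k) :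
    ∀ x : Dom ℂ N d,
      φ (((TensorProduct.map eS LinearMap.id + TensorProduct.map LinearMap.id eW :
            Dom ℂ N d →ₗ[ℂ] Dom ℂ N d)) x) =
        ((TensorProduct.map eV LinearMap.id + TensorProduct.map LinearMap.id eSd :
            Cod ℂ N d →ₗ[ℂ] Cod ℂ N d)) (φ x) := by
  have hφA : ∀ s : ℕ, s < N → ∀ k : Fin (N + 1) → ℕ, StrictMono k → (∀ a, k a ≤ d + 1) →
      φ ((TensorProduct.map eS LinearMap.id + TensorProduct.map LinearMap.id eW :
            Dom ℂ N d →ₗ[ℂ] Dom ℂ N d)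
          (XY ℂ (N - 1) s ⊗ₜ[ℂ] wedge ℂ (d + 1) k))
        = ((TensorProduct.map eV LinearMap.id + TensorProduct.map LinearMap.id eSd :
            Cod ℂ N d →ₗ[ℂ] Cod ℂ N d))
            (φ (XY ℂ (N - 1) s ⊗ₜ[ℂ] wedge ℂ (d + 1) k)) := by
    intro s hs k hk hkd
    rw [LinearMap.add_apply, map_add, TensorProduct.map_tmul, TensorProduct.map_tmul]
    simp only [LinearMap.id_coe, id_eq]
    rw [heS s (by omega), heW k hkd]
    rw [← TensorProduct.smul_tmul', map_smul, hφ (s - 1) (by omega) k hk hkd]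
    rw [TensorProduct.tmul_sum, map_sum]
    simp only [TensorProduct.tmul_smul, map_smul]
    have hkd' : ∀ α : Fin (N + 1), ∀ γ, Function.update k α (k α - 1) γ ≤ d + 1 := by
      intro α γ
      rw [Function.update_apply]
      split_ifs
      · have := hkd α; omega
      · exact hkd γ
    have hterm : ∀ α : Fin (N + 1),
        (k α : ℂ) • φ (XY ℂ (N - 1) s ⊗ₜ[ℂ] wedge ℂ (d + 1) (Function.update k α (k α - 1)))
          = (k α : ℂ) • vv ℂ d N s (Function.update k α (k α - 1)) := by
      intro α
      induction α using Fin.cases with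
      | zero =>
        rcases Nat.eq_zero_or_pos (k 0) with h0 | h0
        · rw [h0]; norm_num
        · rw [hφ s hs _ (update_strictMono_zero hk h0) (hkd' 0)]
      | succ β =>
        have h1 := hk (Fin.castSucc_lt_succ : β.castSucc < β.succ)
        rcases lt_or_eq_of_le (by omega : k β.castSucc ≤ k β.succ - 1) with hlt | heq
        · rw [hφ s hs _ (update_strictMono_succ hk hlt) (hkd' β.succ)]
        · rw [wedge_update_zero (d + 1) N heq, vv_update_zero d N s heq,
            TensorProduct.tmul_zero, map_zero]
    have h6 : (∑ α : Fin (N + 1), (k α : ℂ)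
          • φ (XY ℂ (N - 1) s ⊗ₜ[ℂ] wedge ℂ (d + 1) (Function.update k α (k α - 1))))
        = ∑ α : Fin (N + 1), (k α : ℂ) • vv ℂ d N s (Function.update k α (k α - 1)) :=
      Finset.sum_congr rfl fun α _ => hterm α
    rw [h6, hφ s hs k hk hkd, LinearMap.add_apply]
    have hub : ∀ i ∈ box k, s + (∑ α, k α) - N - (∑ a, i a) ≤ d := by
      intro i hi
      have h7 := box_sum_ub hi
      have h8 := hkd (Fin.last N)
      omega
    have hrhs1 : TensorProduct.map eV LinearMap.id (vv ℂ d N s k)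
        = ∑ i ∈ box k, ∑ β : Fin N, (i β : ℂ)
            • Fp ℂ d (Function.update i β (i β - 1)) (s + (∑ α, k α) - N - ∑ a, i a) := by
      rw [vv, map_sum]
      refine Finset.sum_congr rfl fun i hi => ?_
      unfold Fp
      rw [TensorProduct.map_tmul]
      simp only [LinearMap.id_coe, id_eq]
      rw [heV i (fun a => box_entry_le hi hkd a), TensorProduct.sum_tmul]
      exact Finset.sum_congr rfl fun β _ => by rw [← TensorProduct.smul_tmul']
    have hrhs2 : TensorProduct.map LinearMap.id eSd (vv ℂ d N s k)
        = ∑ i ∈ box k, ((s + (∑ α, k α) - N - (∑ a, i a) : ℕ) : ℂ)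
            • Fp ℂ d i (s + (∑ α, k α) - N - (∑ a, i a) - 1) := by
      rw [vv, map_sum]
      refine Finset.sum_congr rfl fun i hi => ?_
      unfold Fp
      rw [TensorProduct.map_tmul]
      simp only [LinearMap.id_coe, id_eq]
      rw [heSd _ (hub i hi), TensorProduct.tmul_smul]
    rw [hrhs1, hrhs2]
    exact lemmaA d N s hk hkd
  intro x
  have hx : x ∈ Submodule.span ℂ {t : Dom ℂ N d | ∃ p w, p ⊗ₜ[ℂ] w = t} := by
    rw [TensorProduct.span_tmul_eq_top]
    trivial
  induction hx using Submodule.span_induction with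
  | mem t ht =>
    obtain ⟨p, w, rfl⟩ := ht
    have hp := mem_span_XY ℂ (N - 1) p
    induction hp using Submodule.span_induction with
    | mem q hq =>
      obtain ⟨s, hs, rfl⟩ := hq
      have hw := mem_span_wedge ℂ (d + 1) (N + 1) w
      induction hw using Submodule.span_induction with
      | mem u hu =>
        obtain ⟨k, hkd, rfl⟩ := hu
        by_cases hinj : Function.Injective k
        · have hmono : Monotone (k ∘ Tuple.sort k) := Tuple.monotone_sort k
          have hsm : StrictMono (k ∘ Tuple.sort k) :=
            hmono.strictMono_of_injective (hinj.comp (Equiv.injective _))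
          have hw0 : wedge ℂ (d + 1) k
              = (((Equiv.Perm.sign (Tuple.sort k).symm : ℤ) : ℂ)
                  • wedge ℂ (d + 1) (k ∘ Tuple.sort k) :
                    ↥(⋀[ℂ]^(N + 1) (Sym' ℂ (d + 1)))) := by
            have h9 := wedge_perm ℂ (d + 1) (k ∘ Tuple.sort k) (Tuple.sort k).symm
            have hkσ : (k ∘ Tuple.sort k) ∘ (Tuple.sort k).symm = k := by
              funext a
              simp
            rw [hkσ] at h9
            rw [h9]
            exact (Int.cast_smul_eq_zsmul ℂ _ _).symm
          rw [hw0, TensorProduct.tmul_smul]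
          simp only [map_smul]
          rw [hφA s (by omega) _ hsm (fun a => hkd _)]
        · obtain ⟨a, b, hab, hvab⟩ : ∃ a b, a ≠ b ∧ k a = k b := by
            rw [Function.Injective] at hinj
            push_neg at hinj
            obtain ⟨a, b, h1, h2⟩ := hinj
            exact ⟨a, b, h2, h1⟩
          rw [wedge_eq_zero ℂ (d + 1) k hab hvab, TensorProduct.tmul_zero]
          simp only [map_zero]
      | zero => simp only [TensorProduct.tmul_zero, map_zero]
      | add w1 w2 hw1 hw2 ih1 ih2 =>
        rw [TensorProduct.tmul_add]
        simp only [map_add]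
        rw [ih1, ih2]
      | smul c w1 hw1 ih =>
        rw [TensorProduct.tmul_smul]
        simp only [map_smul]
        rw [ih]
    | zero => simp only [TensorProduct.zero_tmul, map_zero]
    | add p1 p2 hp1 hp2 ih1 ih2 =>
      rw [TensorProduct.add_tmul]
      simp only [map_add]
      rw [ih1, ih2]
    | smul c p1 hp1 ih =>
      rw [← TensorProduct.smul_tmul']
      simp only [map_smul]
      rw [ih]
  | zero => simp only [map_zero]
  | add x1 x2 hx1 hx2 ih1 ih2 =>
    simp only [map_add]
    rw [ih1, ih2]
  | smul c x1 hx1 ih =>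
    simp only [map_smul]
    rw [ih]


end
end

section
/- Over the field ℂ, the duality maps intertwine the Lie algebra actions: e ∘ τ = τ ∘ f as endomorphisms of Sym^{N−1}E ⊗ ⋀^{N+1}Sym^{d+1}E, and τ' ∘ e = f ∘ τ' as endomorphisms of ⋀^N Sym^d E ⊗ Sym^d E. -/
open MvPolynomial TensorProduct

set_option maxHeartbeats 1000000
set_option synthInstance.maxHeartbeats 400000

noncomputable section

variable (F : Type*) [Field F]

private lemma ml_span {R M N ι : Type*} [CommSemiring R] [AddCommMonoid M] [Module R M]
    [AddCommMonoid N] [Module R N] {n : ℕ} (f : MultilinearMap R (fun _ : Fin n => M) N)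
    (g : ι → M) (v : Fin n → M) (hv : ∀ i, v i ∈ Submodule.span R (Set.range g)) :
    f v ∈ Submodule.span R (Set.range fun k : Fin n → ι => f fun i => g (k i)) := by
  induction n with
  | zero =>
    have : v = fun i => g (Fin.elim0 i) := funext fun i => i.elim0
    rw [this]
    exact Submodule.subset_span ⟨Fin.elim0, rfl⟩
  | succ n ih =>
    have h0 := hv 0
    have hcons : f v = f.curryLeft (v 0) (Fin.tail v) := by
      rw [MultilinearMap.curryLeft_apply, Fin.cons_self_tail]
    rw [hcons]
    generalize v 0 = x0 at h0 ⊢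
    induction h0 using Submodule.span_induction with
    | mem x hx =>
      obtain ⟨j, rfl⟩ := hx
      have hmem := ih (f.curryLeft (g j)) (Fin.tail v) (fun i => hv i.succ)
      refine Submodule.span_le.mpr ?_ hmem
      rintro _ ⟨k, rfl⟩
      refine Submodule.subset_span ⟨Fin.cons j k, ?_⟩
      simp only [MultilinearMap.curryLeft_apply]
      congr 1
      funext i
      refine Fin.cases ?_ (fun i => ?_) i <;> simp
    | zero => simp
    | add x y hx hy ihx ihy =>
      rw [map_add, MultilinearMap.add_apply]
      exact Submodule.add_mem _ ihx ihy
    | smul a x hx ihx =>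
      rw [map_smul, MultilinearMap.smul_apply]
      exact Submodule.smul_mem _ _ ihx
private lemma spanXY (F : Type*) [Field F] (c : ℕ) :
    Submodule.span F (Set.range fun j : Fin (c + 1) => XY F c (j : ℕ)) = ⊤ := by
  rw [Submodule.eq_top_iff']
  intro p
  have hp : (p : MvPolynomial (Fin 2) F).IsHomogeneous c := p.2
  have key : p = ∑ m ∈ (p : MvPolynomial (Fin 2) F).support.attach,
      (p : MvPolynomial (Fin 2) F).coeff m.1 • XY F c (m.1 1) := by
    apply Subtype.ext
    push_cast [Submodule.coe_sum]
    conv_lhs => rw [(p : MvPolynomial (Fin 2) F).as_sum]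
    rw [← Finset.sum_attach (p : MvPolynomial (Fin 2) F).support
      (fun m => monomial m ((p : MvPolynomial (Fin 2) F).coeff m))]
    apply Finset.sum_congr rfl
    rintro ⟨m, hm⟩ -
    have hm' : (p : MvPolynomial (Fin 2) F).coeff m ≠ 0 := by
      rwa [MvPolynomial.mem_support_iff] at hm
    have hdeg : m 0 + m 1 = c := by
      have h1 := hp hm'
      rw [Pi.one_def, ← Finsupp.degree_eq_weight_one, Finsupp.degree_apply,
        Finset.sum_subset (Finset.subset_univ _)
          (fun x _ hx => Finsupp.notMem_support_iff.mp hx), Fin.sum_univ_two] at h1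
      exact h1
    have h1c : m 1 ≤ c := by omega
    simp only [XY, dif_pos h1c]
    have hm0 : c - m 1 = m 0 := by omega
    rw [hm0]
    have hsingle : (Finsupp.single 0 (m 0) + Finsupp.single 1 (m 1) : Fin 2 →₀ ℕ) = m := by
      ext i
      fin_cases i <;> simp [Finsupp.single_apply]
    have hmono : (X 0 : MvPolynomial (Fin 2) F) ^ (m 0) * X 1 ^ (m 1) = monomial m 1 := by
      rw [X_pow_eq_monomial, X_pow_eq_monomial, monomial_mul, mul_one, hsingle]
    rw [hmono, smul_monomial, smul_eq_mul, mul_one]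
  rw [key]
  apply Submodule.sum_mem
  rintro ⟨m, hm⟩ -
  apply Submodule.smul_mem
  have hm' : (p : MvPolynomial (Fin 2) F).coeff m ≠ 0 := by
    rwa [MvPolynomial.mem_support_iff] at hm
  have hdeg : m 0 + m 1 = c := by
    have h1 := hp hm'
    rw [Pi.one_def, ← Finsupp.degree_eq_weight_one, Finsupp.degree_apply,
      Finset.sum_subset (Finset.subset_univ _)
        (fun x _ hx => Finsupp.notMem_support_iff.mp hx), Fin.sum_univ_two] at h1
    exact h1
  exact Submodule.subset_span ⟨⟨m 1, by omega⟩, rfl⟩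
private lemma spanWedge (F : Type*) [Field F] (c r : ℕ) :
    Submodule.span F (Set.range fun k : Fin r → Fin (c + 1) =>
      wedge F c fun a => ((k a : ℕ))) = ⊤ := by
  apply Submodule.map_injective_of_injective (Submodule.injective_subtype (⋀[F]^r (Sym' F c)))
  rw [Submodule.map_span, Submodule.map_top, Submodule.range_subtype]
  have himg : (⋀[F]^r (Sym' F c)).subtype '' (Set.range fun k : Fin r → Fin (c + 1) =>
      wedge F c fun a => ((k a : ℕ))) = Set.range (fun k : Fin r → Fin (c + 1) =>
      ExteriorAlgebra.ιMulti F r fun a => XY F c (k a)) := by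
    rw [← Set.range_comp]
    rfl
  rw [himg]
  apply le_antisymm
  · rw [Submodule.span_le]
    rintro _ ⟨k, rfl⟩
    exact ExteriorAlgebra.ιMulti_range F r ⟨_, rfl⟩
  · rw [← ExteriorAlgebra.ιMulti_span_fixedDegree]
    rw [Submodule.span_le]
    rintro _ ⟨v, rfl⟩
    have := ml_span (ExteriorAlgebra.ιMulti F r (M := Sym' F c)).toMultilinearMap
      (fun j : Fin (c + 1) => XY F c (j : ℕ)) v
      (fun i => by rw [spanXY]; trivial)
    exact this
private lemma core1 (N d : ℕ)
    (eS fS : Sym' ℂ (N - 1) →ₗ[ℂ] Sym' ℂ (N - 1))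
    (heS : ∀ s ≤ N - 1, eS (XY ℂ (N - 1) s) = (s : ℂ) • XY ℂ (N - 1) (s - 1))
    (hfS : ∀ s ≤ N - 1, fS (XY ℂ (N - 1) s) = ((N - 1 - s : ℕ) : ℂ) • XY ℂ (N - 1) (s + 1))
    (eW fW : ↥(⋀[ℂ]^(N + 1) (Sym' ℂ (d + 1))) →ₗ[ℂ] ↥(⋀[ℂ]^(N + 1) (Sym' ℂ (d + 1))))
    (heW : ∀ k : Fin (N + 1) → ℕ, (∀ a, k a ≤ d + 1) →
      eW (wedge ℂ (d + 1) k) =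
        ∑ α, (k α : ℂ) • wedge ℂ (d + 1) (Function.update k α (k α - 1)))
    (hfW : ∀ k : Fin (N + 1) → ℕ, (∀ a, k a ≤ d + 1) →
      fW (wedge ℂ (d + 1) k) =
        ∑ α, ((d + 1 - k α : ℕ) : ℂ) • wedge ℂ (d + 1) (Function.update k α (k α + 1)))
    (τ : Dom ℂ N d →ₗ[ℂ] Dom ℂ N d)
    (hτ : ∀ j ≤ N - 1, ∀ i : Fin (N + 1) → ℕ, (∀ a, i a ≤ d + 1) →
      τ (XY ℂ (N - 1) j ⊗ₜ[ℂ] wedge ℂ (d + 1) i) =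
        XY ℂ (N - 1) (N - 1 - j) ⊗ₜ[ℂ] wedge ℂ (d + 1) (fun a => d + 1 - i a))
    (j : ℕ) (hj : j ≤ N - 1) (i : Fin (N + 1) → ℕ) (hi : ∀ a, i a ≤ d + 1) :
    ((TensorProduct.map eS LinearMap.id + TensorProduct.map LinearMap.id eW :
        Dom ℂ N d →ₗ[ℂ] Dom ℂ N d))
        (τ (XY ℂ (N - 1) j ⊗ₜ[ℂ] wedge ℂ (d + 1) i)) =
      τ (((TensorProduct.map fS LinearMap.id + TensorProduct.map LinearMap.id fW :
        Dom ℂ N d →ₗ[ℂ] Dom ℂ N d)) (XY ℂ (N - 1) j ⊗ₜ[ℂ] wedge ℂ (d + 1) i)) := by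
  rw [hτ j hj i hi]
  simp only [LinearMap.add_apply, TensorProduct.map_tmul, LinearMap.id_apply]
  rw [heS _ (Nat.sub_le _ _), heW _ (fun a => Nat.sub_le _ _), hfS j hj, hfW i hi]
  simp only [← smul_tmul', tmul_smul, tmul_sum, map_add, map_sum, map_smul]
  congr 1
  · by_cases h : j + 1 ≤ N - 1
    · rw [hτ (j + 1) h i hi]
      have h2 : N - 1 - j - 1 = N - 1 - (j + 1) := by omega
      rw [h2]
    · have h0 : N - 1 - j = 0 := by omega
      simp [h0]
  · apply Finset.sum_congr rfl
    intro α _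
    by_cases h : i α ≤ d
    · rw [hτ j hj (Function.update i α (i α + 1)) (fun a => by
        rcases eq_or_ne a α with rfl | hne
        · simpa using h
        · simpa [Function.update_of_ne hne] using hi a)]
      have hfun : (fun a => d + 1 - Function.update i α (i α + 1) a) =
          Function.update (fun a => d + 1 - i a) α ((fun a => d + 1 - i a) α - 1) := by
        funext a
        rcases eq_or_ne a α with rfl | hne
        · simp only [Function.update_self]
          omega
        · simp [Function.update_of_ne hne]
      rw [hfun]
    · have h1 : d + 1 - i α = 0 := by omega
      simp [h1]

private lemma core2 (N d : ℕ)
    (eV fV : ↥(⋀[ℂ]^N (Sym' ℂ d)) →ₗ[ℂ] ↥(⋀[ℂ]^N (Sym' ℂ d)))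
    (heV : ∀ k : Fin N → ℕ, (∀ a, k a ≤ d) →
      eV (wedge ℂ d k) = ∑ α, (k α : ℂ) • wedge ℂ d (Function.update k α (k α - 1)))
    (hfV : ∀ k : Fin N → ℕ, (∀ a, k a ≤ d) →
      fV (wedge ℂ d k) = ∑ α, ((d - k α : ℕ) : ℂ) • wedge ℂ d (Function.update k α (k α + 1)))
    (eSd fSd : Sym' ℂ d →ₗ[ℂ] Sym' ℂ d)
    (heSd : ∀ j ≤ d, eSd (XY ℂ d j) = (j : ℂ) • XY ℂ d (j - 1))
    (hfSd : ∀ j ≤ d, fSd (XY ℂ d j) = ((d - j : ℕ) : ℂ) • XY ℂ d (j + 1))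
    (τ' : Cod ℂ N d →ₗ[ℂ] Cod ℂ N d)
    (hτ' : ∀ j : Fin N → ℕ, (∀ a, j a ≤ d) → ∀ l ≤ d,
      τ' (wedge ℂ d j ⊗ₜ[ℂ] XY ℂ d l) =
        wedge ℂ d (fun a => d - j a) ⊗ₜ[ℂ] XY ℂ d (d - l))
    (j : Fin N → ℕ) (hj : ∀ a, j a ≤ d) (l : ℕ) (hl : l ≤ d) :
    τ' (((TensorProduct.map eV LinearMap.id + TensorProduct.map LinearMap.id eSd :
        Cod ℂ N d →ₗ[ℂ] Cod ℂ N d)) (wedge ℂ d j ⊗ₜ[ℂ] XY ℂ d l)) =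
      ((TensorProduct.map fV LinearMap.id + TensorProduct.map LinearMap.id fSd :
        Cod ℂ N d →ₗ[ℂ] Cod ℂ N d)) (τ' (wedge ℂ d j ⊗ₜ[ℂ] XY ℂ d l)) := by
  rw [hτ' j hj l hl]
  simp only [LinearMap.add_apply, TensorProduct.map_tmul, LinearMap.id_apply]
  rw [heV j hj, heSd l hl, hfV _ (fun a => Nat.sub_le _ _), hfSd _ (Nat.sub_le _ _)]
  simp only [← smul_tmul', tmul_smul, sum_tmul, map_add, map_sum, map_smul]
  congr 1
  · apply Finset.sum_congr rfl
    intro α _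
    by_cases h : 1 ≤ j α
    · rw [hτ' (Function.update j α (j α - 1)) (fun a => by
        rcases eq_or_ne a α with rfl | hne
        · rw [Function.update_self]; exact le_trans (Nat.sub_le _ _) (hj a)
        · simpa [Function.update_of_ne hne] using hj a) l hl]
      have hja := hj α
      have hc : d - (d - j α) = j α := by omega
      rw [hc]
      have hfun : (fun a => d - Function.update j α (j α - 1) a) =
          Function.update (fun a => d - j a) α ((fun a => d - j a) α + 1) := by
        funext a
        rcases eq_or_ne a α with rfl | hne
        · simp only [Function.update_self]
          omega
        · simp [Function.update_of_ne hne]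
      rw [hfun]
    · have h0 : j α = 0 := by omega
      have h0' : d - (d - j α) = 0 := by omega
      simp [h0, h0']
  · by_cases h : 1 ≤ l
    · rw [hτ' j hj (l - 1) (by omega)]
      have hc : d - (d - l) = l := by omega
      have hc2 : d - (l - 1) = d - l + 1 := by omega
      rw [hc, hc2]
    · have h0 : l = 0 := by omega
      have h0' : d - (d - l) = 0 := by omega
      simp [h0, h0']
/-- Lemma 2.10 of the paper, first two equations. Over `ℂ`, the duality maps
`τ` (on `Sym^{N-1} E ⊗ ⋀^{N+1} Sym^{d+1} E`) and `τ'` (on `⋀^N Sym^d E ⊗ Sym^d E`) intertwine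
the Lie algebra actions: `e ∘ τ = τ ∘ f` and `τ' ∘ e = f ∘ τ'`. -/
theorem statement11 (N d : ℕ) (hN : 0 < N)
    (eS fS : Sym' ℂ (N - 1) →ₗ[ℂ] Sym' ℂ (N - 1))
    (heS : ∀ s ≤ N - 1, eS (XY ℂ (N - 1) s) = (s : ℂ) • XY ℂ (N - 1) (s - 1))
    (hfS : ∀ s ≤ N - 1, fS (XY ℂ (N - 1) s) = ((N - 1 - s : ℕ) : ℂ) • XY ℂ (N - 1) (s + 1))
    (eW fW : ↥(⋀[ℂ]^(N + 1) (Sym' ℂ (d + 1))) →ₗ[ℂ] ↥(⋀[ℂ]^(N + 1) (Sym' ℂ (d + 1))))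
    (heW : ∀ k : Fin (N + 1) → ℕ, (∀ a, k a ≤ d + 1) →
      eW (wedge ℂ (d + 1) k) =
        ∑ α, (k α : ℂ) • wedge ℂ (d + 1) (Function.update k α (k α - 1)))
    (hfW : ∀ k : Fin (N + 1) → ℕ, (∀ a, k a ≤ d + 1) →
      fW (wedge ℂ (d + 1) k) =
        ∑ α, ((d + 1 - k α : ℕ) : ℂ) • wedge ℂ (d + 1) (Function.update k α (k α + 1)))
    (eV fV : ↥(⋀[ℂ]^N (Sym' ℂ d)) →ₗ[ℂ] ↥(⋀[ℂ]^N (Sym' ℂ d)))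
    (heV : ∀ k : Fin N → ℕ, (∀ a, k a ≤ d) →
      eV (wedge ℂ d k) = ∑ α, (k α : ℂ) • wedge ℂ d (Function.update k α (k α - 1)))
    (hfV : ∀ k : Fin N → ℕ, (∀ a, k a ≤ d) →
      fV (wedge ℂ d k) = ∑ α, ((d - k α : ℕ) : ℂ) • wedge ℂ d (Function.update k α (k α + 1)))
    (eSd fSd : Sym' ℂ d →ₗ[ℂ] Sym' ℂ d)
    (heSd : ∀ j ≤ d, eSd (XY ℂ d j) = (j : ℂ) • XY ℂ d (j - 1))
    (hfSd : ∀ j ≤ d, fSd (XY ℂ d j) = ((d - j : ℕ) : ℂ) • XY ℂ d (j + 1))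
    (τ : Dom ℂ N d →ₗ[ℂ] Dom ℂ N d)
    (hτ : ∀ j ≤ N - 1, ∀ i : Fin (N + 1) → ℕ, (∀ a, i a ≤ d + 1) →
      τ (XY ℂ (N - 1) j ⊗ₜ[ℂ] wedge ℂ (d + 1) i) =
        XY ℂ (N - 1) (N - 1 - j) ⊗ₜ[ℂ] wedge ℂ (d + 1) (fun a => d + 1 - i a))
    (τ' : Cod ℂ N d →ₗ[ℂ] Cod ℂ N d)
    (hτ' : ∀ j : Fin N → ℕ, (∀ a, j a ≤ d) → ∀ l ≤ d,
      τ' (wedge ℂ d j ⊗ₜ[ℂ] XY ℂ d l) =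
        wedge ℂ d (fun a => d - j a) ⊗ₜ[ℂ] XY ℂ d (d - l)) :
    (∀ x : Dom ℂ N d,
      ((TensorProduct.map eS LinearMap.id + TensorProduct.map LinearMap.id eW :
          Dom ℂ N d →ₗ[ℂ] Dom ℂ N d)) (τ x) =
        τ (((TensorProduct.map fS LinearMap.id + TensorProduct.map LinearMap.id fW :
          Dom ℂ N d →ₗ[ℂ] Dom ℂ N d)) x)) ∧
    (∀ y : Cod ℂ N d,
      τ' (((TensorProduct.map eV LinearMap.id + TensorProduct.map LinearMap.id eSd :
          Cod ℂ N d →ₗ[ℂ] Cod ℂ N d)) y) =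
        ((TensorProduct.map fV LinearMap.id + TensorProduct.map LinearMap.id fSd :
          Cod ℂ N d →ₗ[ℂ] Cod ℂ N d)) (τ' y)) := by

  constructor
  · have key : ∀ (a : Sym' ℂ (N - 1)) (b : ↥(⋀[ℂ]^(N + 1) (Sym' ℂ (d + 1)))),
        ((TensorProduct.map eS LinearMap.id + TensorProduct.map LinearMap.id eW :
          Dom ℂ N d →ₗ[ℂ] Dom ℂ N d)) (τ (a ⊗ₜ[ℂ] b)) =
        τ (((TensorProduct.map fS LinearMap.id + TensorProduct.map LinearMap.id fW :
          Dom ℂ N d →ₗ[ℂ] Dom ℂ N d)) (a ⊗ₜ[ℂ] b)) := by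
      intro a b
      have ha : a ∈ Submodule.span ℂ
          (Set.range fun j' : Fin (N - 1 + 1) => XY ℂ (N - 1) (j' : ℕ)) := by
        rw [spanXY]; trivial
      induction ha using Submodule.span_induction with
      | mem a' ha' =>
        obtain ⟨j', rfl⟩ := ha'
        have hb : b ∈ Submodule.span ℂ
            (Set.range fun k : Fin (N + 1) → Fin (d + 1 + 1) =>
              wedge ℂ (d + 1) fun a => ((k a : ℕ))) := by
          rw [spanWedge]; trivial
        induction hb using Submodule.span_induction with
        | mem b' hb' =>
          obtain ⟨k, rfl⟩ := hb'
          exact core1 N d eS fS heS hfS eW fW heW hfW τ hτ (j' : ℕ)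
            (Nat.lt_succ_iff.mp j'.isLt) (fun a => (k a : ℕ))
            (fun a => Nat.lt_succ_iff.mp (k a).isLt)
        | zero => simp
        | add y z hy hz ihy ihz => simp only [tmul_add, map_add, ihy, ihz]
        | smul r y hy ihy => simp only [tmul_smul, map_smul, ihy]
      | zero => simp
      | add y z hy hz ihy ihz => simp only [add_tmul, map_add, ihy, ihz]
      | smul r y hy ihy => simp only [← smul_tmul', map_smul, ihy]
    intro x
    induction x using TensorProduct.induction_on with
    | zero => simp
    | tmul a b => exact key a b
    | add u v hu hv => simp only [map_add, hu, hv]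
  · have key : ∀ (a : ↥(⋀[ℂ]^N (Sym' ℂ d))) (b : Sym' ℂ d),
        τ' (((TensorProduct.map eV LinearMap.id + TensorProduct.map LinearMap.id eSd :
          Cod ℂ N d →ₗ[ℂ] Cod ℂ N d)) (a ⊗ₜ[ℂ] b)) =
        ((TensorProduct.map fV LinearMap.id + TensorProduct.map LinearMap.id fSd :
          Cod ℂ N d →ₗ[ℂ] Cod ℂ N d)) (τ' (a ⊗ₜ[ℂ] b)) := by
      intro a b
      have ha : a ∈ Submodule.span ℂ
          (Set.range fun k : Fin N → Fin (d + 1) => wedge ℂ d fun a => ((k a : ℕ))) := by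
        rw [spanWedge]; trivial
      induction ha using Submodule.span_induction with
      | mem a' ha' =>
        obtain ⟨k, rfl⟩ := ha'
        have hb : b ∈ Submodule.span ℂ
            (Set.range fun j' : Fin (d + 1) => XY ℂ d (j' : ℕ)) := by
          rw [spanXY]; trivial
        induction hb using Submodule.span_induction with
        | mem b' hb' =>
          obtain ⟨l, rfl⟩ := hb'
          exact core2 N d eV fV heV hfV eSd fSd heSd hfSd τ' hτ'
            (fun a => (k a : ℕ)) (fun a => Nat.lt_succ_iff.mp (k a).isLt)
            (l : ℕ) (Nat.lt_succ_iff.mp l.isLt)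
        | zero => simp
        | add y z hy hz ihy ihz => simp only [tmul_add, map_add, ihy, ihz]
        | smul r y hy ihy => simp only [tmul_smul, map_smul, ihy]
      | zero => simp
      | add y z hy hz ihy ihz => simp only [add_tmul, map_add, ihy, ihz]
      | smul r y hy ihy => simp only [← smul_tmul', map_smul, ihy]
    intro y
    induction y using TensorProduct.induction_on with
    | zero => simp
    | tmul a b => exact key a b
    | add u v hu hv => simp only [map_add, hu, hv]

end
end

section
/- Let (i,j) ∈ I(d,N) × {0,1,…,d} be a semistandard pair with j ∉ {i_1,…,i_N}, let s ∈ {0,1,…,N−1} and let k ∈ I(d+1,N+1) be strictly increasing. Suppose F(i,j) has a nonzero coefficient in the expression of v_{(s,k)} in the canonical basis of ⋀^N Sym^d E ⊗ Sym^d E, and suppose that for some m ≥ 1 the m-th iterate (i′,j′) = P^m(i,j) is defined and F(i′,j′) also has a nonzero coefficient in v_{(s,k)}. Then m = 1. -/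
open MvPolynomial TensorProduct

set_option maxHeartbeats 1000000
set_option synthInstance.maxHeartbeats 400000

noncomputable section

variable (F : Type*) [Field F]

namespace Stmt14

variable (F : Type*) [Field F]

/-- Dual functional on `Sym' F d` extracting the coefficient of `X^{d-j} Y^j`. -/
def lcXY (d j : ℕ) : Sym' F d →ₗ[F] F :=
  (MvPolynomial.lcoeff F
      (Finsupp.single (0 : Fin 2) (d - j) + Finsupp.single (1 : Fin 2) j)) ∘ₗ
    (Submodule.subtype _)

lemma lcXY_XY (d j j' : ℕ) (hj : j ≤ d) (hj' : j' ≤ d) :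
    lcXY F d j (XY F d j') = if j = j' then 1 else 0 := by
  rw [lcXY, XY, dif_pos hj']
  simp only [LinearMap.comp_apply, Submodule.coe_subtype]
  rw [MvPolynomial.X_pow_eq_monomial, MvPolynomial.X_pow_eq_monomial,
    MvPolynomial.monomial_mul, mul_one]
  simp only [MvPolynomial.lcoeff_apply, MvPolynomial.coeff_monomial]
  congr 1
  simp only [eq_iff_iff]
  constructor
  · intro h
    have := DFunLike.congr_fun h 1
    simp [Finsupp.single_apply] at this
    omega
  · intro h
    subst h
    rfl

end Stmt14
namespace Stmt14

variable (F : Type*) [Field F]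

lemma strictMono_of_adj {N : ℕ} {f : Fin N → ℕ}
    (h : ∀ a : Fin N, ∀ hb : (a : ℕ) + 1 < N, f a < f ⟨(a : ℕ) + 1, hb⟩) :
    StrictMono f := by
  have key : ∀ n (hn : n < N) (a : Fin N), (a : ℕ) < n → f a < f ⟨n, hn⟩ := by
    intro n
    induction n with
    | zero => intro _ _ h0; omega
    | succ n ih =>
      intro hn a ha
      rcases Nat.lt_or_ge (a : ℕ) n with h1 | h1
      · exact (ih (by omega) a h1).trans (h ⟨n, by omega⟩ hn)
      · have hae : (a : ℕ) = n := by omega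
        have := h a (by omega)
        convert this using 3
        omega
  intro a b hab
  have := key (b : ℕ) b.isLt a hab
  simpa using this

/-- The delta-determinant lemma. -/
lemma detDelta {N : ℕ} (p q : Fin N → ℕ) (hp : StrictMono p) (hq : StrictMono q) :
    Matrix.det (Matrix.of fun b a => if q a = p b then (1 : F) else 0) =
      if p = q then 1 else 0 := by
  by_cases hpq : p = q
  · subst hpq
    rw [if_pos rfl]
    have : (Matrix.of fun b a => if p a = p b then (1 : F) else 0) = 1 := by
      ext b a
      simp only [Matrix.of_apply, Matrix.one_apply]
      by_cases h : a = b
      · subst h; simp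
      · rw [if_neg (fun hh => h (hp.injective hh)), if_neg (Ne.symm h)]
    rw [this, Matrix.det_one]
  · rw [if_neg hpq]
    -- there is a column `a` with `q a` not in the range of `p`
    have : ∃ a : Fin N, ∀ b : Fin N, q a ≠ p b := by
      by_contra hcon
      push_neg at hcon
      apply hpq
      have hcard : (Finset.univ.image p).card = N := by
        rw [Finset.card_image_of_injective _ hp.injective, Finset.card_univ, Fintype.card_fin]
      have hmem : ∀ x, q x ∈ Finset.univ.image p := by
        intro x
        obtain ⟨b, hb⟩ := hcon x
        exact Finset.mem_image.2 ⟨b, Finset.mem_univ _, hb.symm⟩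
      have hpe : p = (Finset.univ.image p).orderEmbOfFin hcard := by
        refine Finset.orderEmbOfFin_unique hcard ?_ hp
        intro x; exact Finset.mem_image_of_mem _ (Finset.mem_univ _)
      have hqe : q = (Finset.univ.image p).orderEmbOfFin hcard :=
        Finset.orderEmbOfFin_unique hcard hmem hq
      rw [hpe, hqe]
    obtain ⟨a, ha⟩ := this
    exact Matrix.det_eq_zero_of_column_eq_zero a fun b => by simp [Ne.symm, if_neg (ha b)]

end Stmt14
namespace Stmt14

variable (F : Type*) [Field F]

/-- The alternating "determinant of dual evaluations" map. -/
def altQ (d N : ℕ) (q : Fin N → ℕ) : (Sym' F d) [⋀^Fin N]→ₗ[F] F :=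
  (Matrix.detRowAlternating).compLinearMap (LinearMap.pi fun a => lcXY F d (q a))

lemma altQ_apply (d N : ℕ) (q : Fin N → ℕ) (v : Fin N → Sym' F d) :
    altQ F d N q v = Matrix.det (Matrix.of fun b a => lcXY F d (q a) (v b)) := rfl

def altFam (d N : ℕ) (q : Fin N → ℕ) (n : ℕ) : (Sym' F d) [⋀^Fin n]→ₗ[F] F :=
  if h : n = N then (altQ F d N q).domDomCongr (finCongr h).symm else 0

lemma altFam_self (d N : ℕ) (q : Fin N → ℕ) : altFam F d N q N = altQ F d N q := by
  simp [altFam]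

def dualW (d N : ℕ) (q : Fin N → ℕ) : (⋀[F]^N (Sym' F d)) →ₗ[F] F :=
  (ExteriorAlgebra.liftAlternating (altFam F d N q)) ∘ₗ (Submodule.subtype _)

lemma dualW_wedge (d N : ℕ) (q p : Fin N → ℕ) (hp : StrictMono p) (hq : StrictMono q)
    (hpd : ∀ a, p a ≤ d) (hqd : ∀ a, q a ≤ d) :
    dualW F d N q (wedge F d p) = if p = q then 1 else 0 := by
  rw [dualW, LinearMap.comp_apply]
  rw [show ((Submodule.subtype _) (wedge F d p) : ExteriorAlgebra F (Sym' F d)) =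
    ExteriorAlgebra.ιMulti F N fun a => XY F d (p a) from rfl]
  rw [ExteriorAlgebra.liftAlternating_apply_ιMulti, altFam_self, altQ_apply]
  have : (Matrix.of fun b a => lcXY F d (q a) (XY F d (p b))) =
      (Matrix.of fun b a => if q a = p b then (1 : F) else 0) := by
    ext b a
    simp only [Matrix.of_apply]
    rw [lcXY_XY F d (q a) (p b) (hqd a) (hpd b)]
  rw [this, detDelta F p q hp hq]

/-- The dual functional on the tensor product. -/
def Phi (d N : ℕ) (q : (Fin N → ℕ) × ℕ) :
    ((⋀[F]^N (Sym' F d)) ⊗[F] (Sym' F d)) →ₗ[F] F :=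
  TensorProduct.lift ((LinearMap.mul F F ∘ₗ dualW F d N q.1).compl₂ (lcXY F d q.2))

lemma Phi_tmul (d N : ℕ) (q : (Fin N → ℕ) × ℕ) (w : ⋀[F]^N (Sym' F d)) (v : Sym' F d) :
    Phi F d N q (w ⊗ₜ[F] v) = dualW F d N q.1 w * lcXY F d q.2 v := rfl

lemma Phi_Fp (d N : ℕ) (q p : (Fin N → ℕ) × ℕ)
    (hp : StrictMono p.1) (hq : StrictMono q.1)
    (hpd : ∀ a, p.1 a ≤ d) (hqd : ∀ a, q.1 a ≤ d) (hp2 : p.2 ≤ d) (hq2 : q.2 ≤ d) :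
    Phi F d N q (Fp F d p.1 p.2) = if p = q then 1 else 0 := by
  rw [Fp, Phi_tmul, dualW_wedge F d N q.1 p.1 hp hq hpd hqd,
    lcXY_XY F d q.2 p.2 hq2 hp2]
  by_cases h : p = q
  · subst h; simp
  · rw [if_neg h]
    rw [Prod.ext_iff] at h
    push_neg at h
    by_cases h1 : p.1 = q.1
    · rw [if_pos h1, if_neg (fun hh => (h h1) hh.symm)]; ring
    · rw [if_neg h1]; ring
end Stmt14
namespace Stmt14

variable (F : Type*) [Field F]

lemma mem_box_iff {N : ℕ} (k : Fin (N + 1) → ℕ) (i : Fin N → ℕ) :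
    i ∈ box k ↔ ∀ a : Fin N, k a.castSucc ≤ i a ∧ i a < k a.succ := by
  rw [box]
  rw [Fintype.mem_piFinset]
  simp [Finset.mem_Ico]

lemma box_strictMono {N : ℕ} {k : Fin (N + 1) → ℕ} (hk : Monotone k) {i : Fin N → ℕ}
    (hi : i ∈ box k) : StrictMono i := by
  rw [mem_box_iff] at hi
  apply strictMono_of_adj
  intro a hb
  have h1 := (hi a).2
  have h2 := (hi ⟨(a : ℕ) + 1, hb⟩).1
  have h3 : k a.succ ≤ k (Fin.castSucc ⟨(a : ℕ) + 1, hb⟩) := by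
    apply hk
    simp [Fin.le_def]
  omega

lemma box_le {N d : ℕ} {k : Fin (N + 1) → ℕ} (hk' : ∀ a, k a ≤ d + 1) {i : Fin N → ℕ}
    (hi : i ∈ box k) : ∀ a, i a ≤ d := by
  rw [mem_box_iff] at hi
  intro a
  have := (hi a).2
  have := hk' a.succ
  omega

lemma box_jval_le {N d s : ℕ} {k : Fin (N + 1) → ℕ} (hN : 0 < N) (hs : s < N)
    (hk' : ∀ a, k a ≤ d + 1) {i : Fin N → ℕ} (hi : i ∈ box k) :
    s + (∑ a, k a) - N - (∑ a, i a) ≤ d := by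
  rw [mem_box_iff] at hi
  have hsum : ∑ a : Fin N, k a.castSucc ≤ ∑ a, i a :=
    Finset.sum_le_sum fun a _ => (hi a).1
  have hks : ∑ a : Fin (N + 1), k a = (∑ a : Fin N, k a.castSucc) + k (Fin.last N) :=
    Fin.sum_univ_castSucc k
  have hlast := hk' (Fin.last N)
  omega

lemma Phi_vv (d N s : ℕ) (k : Fin (N + 1) → ℕ) (hN : 0 < N) (hs : s < N)
    (hk : StrictMono k) (hk' : ∀ a, k a ≤ d + 1) (q : (Fin N → ℕ) × ℕ)
    (hq : StrictMono q.1) (hqd : ∀ a, q.1 a ≤ d) (hq2 : q.2 ≤ d) :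
    Phi F d N q (vv F d N s k) =
      if q.1 ∈ box k ∧ q.2 = s + (∑ a, k a) - N - ∑ a, q.1 a then 1 else 0 := by
  rw [vv, map_sum]
  have hterm : ∀ i ∈ box k, Phi F d N q (Fp F d i (s + (∑ a, k a) - N - ∑ a, i a)) =
      if i = q.1 then
        (if ((i, s + (∑ a, k a) - N - ∑ a, i a) : (Fin N → ℕ) × ℕ) = q then (1 : F) else 0)
      else 0 := by
    intro i hi
    rw [Phi_Fp F d N q (i, s + (∑ a, k a) - N - ∑ a, i a)
      (box_strictMono hk.monotone hi) hq (box_le hk' hi) hqd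
      (box_jval_le hN hs hk' hi) hq2]
    by_cases h : i = q.1
    · rw [if_pos h]
    · rw [if_neg h, if_neg (fun hc => h (congrArg Prod.fst hc))]
  rw [Finset.sum_congr rfl hterm, Finset.sum_ite_eq' (box k) q.1]
  by_cases h1 : q.1 ∈ box k
  · rw [if_pos h1]
    have hiff : (((q.1, s + (∑ a, k a) - N - ∑ a, q.1 a) : (Fin N → ℕ) × ℕ) = q) ↔
        (q.2 = s + (∑ a, k a) - N - ∑ a, q.1 a) := by
      constructor
      · intro h; rw [← h]
      · intro h; exact Prod.ext_iff.2 ⟨rfl, h.symm⟩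
    by_cases h2 : q.2 = s + (∑ a, k a) - N - ∑ a, q.1 a
    · rw [if_pos (hiff.2 h2), if_pos ⟨h1, h2⟩]
    · rw [if_neg (fun hc => h2 (hiff.1 hc)), if_neg (fun hc => h2 hc.2)]
  · rw [if_neg h1, if_neg (fun hc => h1 hc.1)]

end Stmt14
namespace Stmt14

lemma comb {N d : ℕ} (hN : 0 < N) (i : Fin N → ℕ) (j : ℕ) (hss : IsSS d (i, j))
    (hnot : ¬ ∃ a, i a = j) {k : Fin (N + 1) → ℕ}
    (hibox : i ∈ box k) (m : ℕ) (hm2 : 2 ≤ m)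
    (hdef : ∀ l < m, IsSS d (Pmap^[l] (i, j)))
    (hqbox : (Pmap^[m] (i, j)).1 ∈ box k) : False := by
  have hmono : StrictMono i := hss.1
  have hne : (Finset.univ.filter fun a : Fin N => i a ≤ j).Nonempty :=
    ⟨⟨0, hN⟩, Finset.mem_filter.2 ⟨Finset.mem_univ _, hss.2.2.2 ⟨0, hN⟩ rfl⟩⟩
  set α := (Finset.univ.filter fun a : Fin N => i a ≤ j).max' hne with hα
  have hαj : i α ≤ j :=
    (Finset.mem_filter.1 ((Finset.univ.filter fun a : Fin N => i a ≤ j).max'_mem hne)).2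
  have hαlt : i α < j := lt_of_le_of_ne hαj (fun h => hnot ⟨α, h⟩)
  have hP1 : Pmap (i, j) = (Function.update i α j, i α) := by
    unfold Pmap
    rw [dif_pos hne]
  by_cases hα0 : (α : ℕ) = 0
  · have hssp := hdef 1 (by omega)
    rw [Function.iterate_one, hP1] at hssp
    have : j ≤ i α := by simpa using hssp.2.2.2 α hα0
    omega
  -- now 1 ≤ α
  set i1 := Function.update i α j with hi1def
  set β : Fin N := ⟨(α : ℕ) - 1, by omega⟩ with hβ
  have hβval : (β : ℕ) = (α : ℕ) - 1 := rfl
  have hβα : β < α := by rw [Fin.lt_def]; omega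
  have hi1β : i1 β = i β := by
    rw [hi1def]; exact Function.update_of_ne (Fin.ne_of_lt hβα) _ _
  have hne2 : (Finset.univ.filter fun a : Fin N => i1 a ≤ i α).Nonempty :=
    ⟨β, Finset.mem_filter.2 ⟨Finset.mem_univ _, by rw [hi1β]; exact le_of_lt (hmono hβα)⟩⟩
  have hmax2 : (Finset.univ.filter fun a : Fin N => i1 a ≤ i α).max' hne2 = β := by
    refine le_antisymm (Finset.max'_le _ _ _ ?_) (Finset.le_max' _ _
      (Finset.mem_filter.2 ⟨Finset.mem_univ _, by rw [hi1β]; exact le_of_lt (hmono hβα)⟩))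
    intro a ha
    have ha2 := (Finset.mem_filter.1 ha).2
    by_contra hcon
    rw [not_le, Fin.lt_def] at hcon
    by_cases haα : a = α
    · subst haα
      rw [hi1def, Function.update_self] at ha2
      omega
    · have hαa : α < a := by
        rw [Fin.lt_def]
        have : (a : ℕ) ≠ (α : ℕ) := fun h => haα (Fin.ext h)
        omega
      rw [hi1def, Function.update_of_ne haα] at ha2
      exact absurd ha2 (not_le.2 (hmono hαa))
  set i2 := Function.update i1 β (i α) with hi2def
  have hP2 : Pmap (i1, i α) = (i2, i β) := by
    unfold Pmap
    rw [dif_pos hne2]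
    simp only [hmax2, hi1β, hi2def]
  have hP2' : Pmap^[2] (i, j) = (i2, i β) := by
    rw [show (2 : ℕ) = 1 + 1 from rfl, Function.iterate_add_apply, Function.iterate_one,
      hP1, hP2]
  have hi2β : i2 β = i α := by rw [hi2def]; exact Function.update_self _ _ _
  have hi2 : ∀ a : Fin N, β ≤ a → i β < i2 a := by
    intro a ha
    by_cases haβ : a = β
    · subst haβ
      rw [hi2β]
      exact hmono hβα
    · have haβ' : β < a := lt_of_le_of_ne ha (Ne.symm haβ)
      rw [hi2def, Function.update_of_ne haβ]
      by_cases haα : a = α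
      · subst haα
        rw [hi1def, Function.update_self]
        exact lt_trans (hmono hβα) hαlt
      · rw [hi1def, Function.update_of_ne haα]
        exact hmono haβ'
  have hInv : ∀ l, 2 ≤ l →
      (∀ a : Fin N, β ≤ a → (Pmap^[l] (i, j)).1 a = i2 a) ∧ (Pmap^[l] (i, j)).2 ≤ i β := by
    intro l hl
    induction l, hl using Nat.le_induction with
    | base => rw [hP2']; exact ⟨fun a _ => rfl, le_refl _⟩
    | succ l hl ih =>
      obtain ⟨ih1, ih2⟩ := ih
      rw [Function.iterate_succ_apply']
      set p := Pmap^[l] (i, j) with hp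
      by_cases hne3 : (Finset.univ.filter fun a : Fin N => p.1 a ≤ p.2).Nonempty
      · set γ := (Finset.univ.filter fun a : Fin N => p.1 a ≤ p.2).max' hne3 with hγ
        have hγ2 : p.1 γ ≤ p.2 :=
          (Finset.mem_filter.1 ((Finset.univ.filter fun a : Fin N => p.1 a ≤ p.2).max'_mem
            hne3)).2
        have hγβ : γ < β := by
          by_contra hcon
          rw [not_lt] at hcon
          have h1 := ih1 γ hcon
          have h2 := hi2 γ hcon
          omega
        have hP3 : Pmap p = (Function.update p.1 γ p.2, p.1 γ) := by
          unfold Pmap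
          rw [dif_pos hne3]
        rw [hP3]
        constructor
        · intro a ha
          have hne4 : γ ≠ a := Fin.ne_of_lt (lt_of_lt_of_le hγβ ha)
          show Function.update p.1 γ p.2 a = i2 a
          rw [Function.update_of_ne (Ne.symm hne4)]
          exact ih1 a ha
        · exact le_trans hγ2 ih2
      · have hP3 : Pmap p = p := by
          unfold Pmap
          rw [dif_neg hne3]
        rw [hP3]
        exact ⟨ih1, ih2⟩
  obtain ⟨hm1', -⟩ := hInv m hm2
  have hfinal : (Pmap^[m] (i, j)).1 β = i α := by rw [hm1' β (le_refl β), hi2β]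
  rw [mem_box_iff] at hibox hqbox
  have h1 := (hibox α).1
  have h2 := (hqbox β).2
  have hsa : β.succ = α.castSucc := Fin.ext (by
    simp only [Fin.val_succ, Fin.coe_castSucc, hβval]; omega)
  rw [hsa] at h2
  omega

end Stmt14


/-- Lemma 2.12 of the paper. Let `(i,j)` be a semistandard pair with
`j ∉ {i₁,…,i_N}`, let `s ∈ {0,…,N-1}` and let `k ∈ I(d+1,N+1)` be strictly increasing. If both
`F(i,j)` and `F(P^m(i,j))` (where `m ≥ 1` and all intermediate iterates are semistandard) have
nonzero coefficients in the expression of `v_{(s,k)}` in the canonical basis of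
`⋀^N Sym^d E ⊗ Sym^d E`, then `m = 1`. -/
theorem statement14 (F : Type*) [Field F] (N d : ℕ) (hN : 0 < N)
    (i : Fin N → ℕ) (j : ℕ) (hss : IsSS d (i, j)) (hnot : ¬ ∃ a, i a = j)
    (s : ℕ) (hs : s < N) (k : Fin (N + 1) → ℕ)
    (hk : StrictMono k) (hk' : ∀ a, k a ≤ d + 1)
    (m : ℕ) (hm : 1 ≤ m) (hdef : ∀ l < m, IsSS d (Pmap^[l] (i, j)))
    (hcoeff : ∃ c : ((Fin N → ℕ) × ℕ) →₀ F,
      (∀ p ∈ c.support, StrictMono p.1 ∧ (∀ a, p.1 a ≤ d) ∧ p.2 ≤ d) ∧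
      (c.sum fun p r => r • Fp F d p.1 p.2) = vv F d N s k ∧
      c (i, j) ≠ 0 ∧ c (Pmap^[m] (i, j)) ≠ 0) :
    m = 1 := by
  obtain ⟨c, h1, heq, hci, hcm⟩ := hcoeff
  have hextract : ∀ q : (Fin N → ℕ) × ℕ, c q ≠ 0 → q.1 ∈ box k := by
    intro q hq0
    have hqmem : q ∈ c.support := Finsupp.mem_support_iff.2 hq0
    obtain ⟨hqs, hqd, hq2⟩ := h1 q hqmem
    have happ := congrArg (Stmt14.Phi F d N q) heq
    rw [Stmt14.Phi_vv F d N s k hN hs hk hk' q hqs hqd hq2] at happ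
    rw [Finsupp.sum, map_sum] at happ
    have hterm : ∀ p ∈ c.support, Stmt14.Phi F d N q (c p • Fp F d p.1 p.2) =
        if p = q then c p else 0 := by
      intro p hp
      obtain ⟨hps, hpd, hp2⟩ := h1 p hp
      rw [map_smul, Stmt14.Phi_Fp F d N q p hps hqs hpd hqd hp2 hq2]
      by_cases h : p = q
      · rw [if_pos h, if_pos h, smul_eq_mul, mul_one]
      · rw [if_neg h, if_neg h, smul_eq_mul, mul_zero]
    rw [Finset.sum_congr rfl hterm, Finset.sum_ite_eq' c.support q, if_pos hqmem] at happ
    by_contra hcon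
    have : ¬ (q.1 ∈ box k ∧ q.2 = s + (∑ a, k a) - N - ∑ a, q.1 a) := fun hc => hcon hc.1
    rw [if_neg this] at happ
    exact hq0 happ
  by_contra hm1
  exact Stmt14.comb hN i j hss hnot (hextract (i, j) hci) m (by omega) hdef
    (hextract (Pmap^[m] (i, j)) hcm)

end
end

section
/- For all integers N ≥ 1 and d ≥ 0, the following identity holds in the polynomial ring ℤ[q]: (Σ_{s=0}^{N−1} q^s) · (Σ_{K ⊆ {0,1,…,d+1}, |K|=N+1} q^{ΣK}) = q^N · Σ_{(i,j) semistandard} q^{|i|+j}, where the sum on the right is over all semistandard pairs (i,j) ∈ I(d,N) × {0,1,…,d} and ΣK denotes the sum of the elements of K. (This is the identity q^{N(N−1)/2}·[N]_q·[d+2 choose N+1]_q = s_{(2,1^{N−1})}(1,q,…,q^d), where [N]_q = 1+q+⋯+q^{N−1}, [a choose b]_q denotes the Gaussian binomial coefficient, and s_{(2,1^{N−1})} is the Schur function of the partition (2,1^{N−1}), rewritten via the facts that q^{b(b−1)/2}[a choose b]_q is the generating function for b-subsets of {0,…,a−1} by sum of entries and that s_λ(1,q,…,q^d) is the generating function for semistandard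 tableaux of shape λ with entries in {0,…,d} by sum of entries.) -/
open Finset

/-- Enumeration of a finset of naturals in increasing order. -/
def kfun (K : Finset ℕ) (n : ℕ) : ℕ := (K.sort (· ≤ ·)).getD n 0

lemma kfun_oEOF {K : Finset ℕ} {m : ℕ} (h : K.card = m) {n : ℕ} (hn : n < m) :
    kfun K n = K.orderEmbOfFin h ⟨n, hn⟩ := by
  rw [kfun, List.getD_eq_getElem _ _ (by rw [Finset.length_sort, h]; exact hn),
    Finset.orderEmbOfFin_apply]
  simp [Fin.getElem_fin]

lemma kfun_mem {K : Finset ℕ} {m : ℕ} (h : K.card = m) {n : ℕ} (hn : n < m) :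
    kfun K n ∈ K := by
  rw [kfun_oEOF h hn]; exact Finset.orderEmbOfFin_mem K h _

lemma kfun_lt {K : Finset ℕ} {m : ℕ} (h : K.card = m) {a b : ℕ} (hab : a < b) (hb : b < m) :
    kfun K a < kfun K b := by
  rw [kfun_oEOF h (hab.trans hb), kfun_oEOF h hb]
  exact (K.orderEmbOfFin h).strictMono (show (⟨a, hab.trans hb⟩ : Fin m) < ⟨b, hb⟩ from hab)

lemma kfun_image_eq {K : Finset ℕ} {m : ℕ} (h : K.card = m) :
    K = (Finset.range m).image (kfun K) := by
  symm
  apply Finset.eq_of_subset_of_card_le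
  · intro y hy
    rcases Finset.mem_image.1 hy with ⟨n, hn, rfl⟩
    exact kfun_mem h (mem_range.1 hn)
  · rw [h, Finset.card_image_of_injOn, Finset.card_range]
    intro a ha b hb hab
    rcases lt_trichotomy a b with h' | h' | h'
    · exact absurd hab (ne_of_lt (kfun_lt h h' (mem_range.1 hb)))
    · exact h'
    · exact absurd hab.symm (ne_of_lt (kfun_lt h h' (mem_range.1 ha)))

lemma kfun_sum {K : Finset ℕ} {m : ℕ} (h : K.card = m) :
    ∑ x ∈ K, x = ∑ n ∈ Finset.range m, kfun K n := by
  conv_lhs => rw [kfun_image_eq h]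
  apply Finset.sum_image
  intro a ha b hb hab
  rcases lt_trichotomy a b with h' | h' | h'
  · exact absurd hab (ne_of_lt (kfun_lt h h' (mem_range.1 hb)))
  · exact h'
  · exact absurd hab.symm (ne_of_lt (kfun_lt h h' (mem_range.1 ha)))

lemma kfun_enum {g : ℕ → ℕ} {m : ℕ} (hg : ∀ a b : ℕ, a < b → b < m → g a < g b)
    {n : ℕ} (hn : n < m) : kfun ((Finset.range m).image g) n = g n := by
  have hcard : ((Finset.range m).image g).card = m := by
    rw [Finset.card_image_of_injOn, Finset.card_range]
    intro a ha b hb hab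
    rcases lt_trichotomy a b with h' | h' | h'
    · exact absurd hab (ne_of_lt (hg a b h' (mem_range.1 hb)))
    · exact h'
    · exact absurd hab.symm (ne_of_lt (hg b a h' (mem_range.1 ha)))
  have huniq := Finset.orderEmbOfFin_unique (f := fun i : Fin m => g i) hcard
    (fun i => Finset.mem_image_of_mem g (mem_range.2 i.2))
    (fun i j hij => hg i j hij j.2)
  rw [kfun_oEOF hcard hn, ← huniq]

lemma filter_init {N : ℕ} {P : Fin N → Prop} [DecidablePred P]
    (hdc : ∀ a b : Fin N, a ≤ b → P b → P a) (a : Fin N) :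
    P a ↔ (a : ℕ) < (Finset.univ.filter P).card := by
  constructor
  · intro ha
    have hsub : Finset.Iic a ⊆ Finset.univ.filter P := fun b hb =>
      mem_filter.2 ⟨mem_univ _, hdc b a (mem_Iic.1 hb) ha⟩
    have := Finset.card_le_card hsub
    rw [Fin.card_Iic] at this
    omega
  · intro ha
    by_contra hna
    have hsub : Finset.univ.filter P ⊆ Finset.Iio a := by
      intro b hb
      rw [mem_Iio]
      by_contra hba
      exact hna (hdc a b (not_lt.1 hba) (mem_filter.1 hb).2)
    have := Finset.card_le_card hsub
    rw [Fin.card_Iio] at this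
    omega

lemma card_filter_le_val {N s : ℕ} (hs : s < N) :
    ((Finset.univ : Finset (Fin N)).filter fun a : Fin N => (a : ℕ) ≤ s).card = s + 1 := by
  have h : (Finset.range N).filter (fun n => n ≤ s) = Finset.range (s + 1) := by
    ext n
    simp only [mem_filter, mem_range]
    omega
  calc ((Finset.univ : Finset (Fin N)).filter fun a : Fin N => (a : ℕ) ≤ s).card
      = ∑ a : Fin N, if (a : ℕ) ≤ s then 1 else 0 := Finset.card_filter _ _
    _ = ∑ n ∈ Finset.range N, if n ≤ s then 1 else 0 :=
        Fin.sum_univ_eq_sum_range (fun n => if n ≤ s then 1 else 0) N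
    _ = ((Finset.range N).filter fun n => n ≤ s).card := (Finset.card_filter _ _).symm
    _ = s + 1 := by rw [h, card_range]

def fwdMap (N d : ℕ) (x : ℕ × Finset ℕ) : (Fin N → Fin (d + 1)) × Fin (d + 1) :=
  (fun a => ⟨min (if (a : ℕ) ≤ x.1 then kfun x.2 a else kfun x.2 ((a : ℕ) + 1) - 1) d,
      by omega⟩,
   ⟨min (kfun x.2 (x.1 + 1) - 1) d, by omega⟩)

def bwdMap (N d : ℕ) (p : (Fin N → Fin (d + 1)) × Fin (d + 1)) : ℕ × Finset ℕ :=
  ((Finset.univ.filter fun a => (p.1 a : ℕ) ≤ (p.2 : ℕ)).card - 1,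
   insert ((p.2 : ℕ) + 1)
     (Finset.univ.image fun a =>
       if (p.1 a : ℕ) ≤ (p.2 : ℕ) then (p.1 a : ℕ) else (p.1 a : ℕ) + 1))

lemma fwd_fst_val (N d : ℕ) (s : ℕ) (K : Finset ℕ) (a : Fin N) :
    ((fwdMap N d (s, K)).1 a : ℕ) =
      min (if (a : ℕ) ≤ s then kfun K a else kfun K ((a : ℕ) + 1) - 1) d := rfl

lemma fwd_snd_val (N d : ℕ) (s : ℕ) (K : Finset ℕ) :
    ((fwdMap N d (s, K)).2 : ℕ) = min (kfun K (s + 1) - 1) d := rfl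

section
variable {N d : ℕ}

lemma kfun_le (hK : (K : Finset ℕ).card = N + 1) (hsub : K ⊆ Finset.range (d + 2)) :
    ∀ n, n ≤ N → kfun K n ≤ d + 1 := fun n hn => by
  have := hsub (kfun_mem hK (by omega : n < N + 1))
  rw [mem_range] at this
  omega

lemma fwd_mem (hN : 0 < N) {x : ℕ × Finset ℕ}
    (hx : x ∈ (Finset.range N) ×ˢ (Finset.range (d + 2)).powersetCard (N + 1)) :
    fwdMap N d x ∈ Finset.univ.filter
      (fun p : (Fin N → Fin (d + 1)) × Fin (d + 1) =>
        StrictMono p.1 ∧ (p.1 ⟨0, hN⟩ : ℕ) ≤ (p.2 : ℕ)) := by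
  obtain ⟨s, K⟩ := x
  rw [Finset.mem_product, Finset.mem_range, Finset.mem_powersetCard] at hx
  have hs : s < N := hx.1
  have hsub : K ⊆ Finset.range (d + 2) := hx.2.1
  have hK : K.card = N + 1 := hx.2.2
  have hk2 := kfun_le hK hsub
  rw [Finset.mem_filter]
  refine ⟨Finset.mem_univ _, ?_, ?_⟩
  · intro a b hab
    have hab' : (a : ℕ) < (b : ℕ) := hab
    have hbN : (b : ℕ) < N := b.2
    have haN : (a : ℕ) < N := a.2
    rw [Fin.lt_def, fwd_fst_val, fwd_fst_val]
    have hA1 : kfun K a < kfun K b := kfun_lt hK hab' (by omega)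
    have hA2 : kfun K ((a : ℕ) + 1) < kfun K ((b : ℕ) + 1) := kfun_lt hK (by omega) (by omega)
    have hA3 : kfun K b < kfun K ((b : ℕ) + 1) := kfun_lt hK (by omega) (by omega)
    have hA4 : kfun K a < kfun K ((a : ℕ) + 1) := kfun_lt hK (by omega) (by omega)
    have hB1 : kfun K ((a : ℕ) + 1) ≤ d + 1 := hk2 _ (by omega)
    have hB2 : kfun K ((b : ℕ) + 1) ≤ d + 1 := hk2 _ (by omega)
    split_ifs <;> omega
  · rw [fwd_fst_val, fwd_snd_val]
    have h1 : kfun K 0 < kfun K (s + 1) := kfun_lt hK (by omega) (by omega)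
    have h2 : kfun K (s + 1) ≤ d + 1 := hk2 _ (by omega)
    simp only [Fin.val_mk, Nat.zero_le, if_true]
    omega

lemma bwd_mem (hN : 0 < N) {p : (Fin N → Fin (d + 1)) × Fin (d + 1)}
    (hp : p ∈ Finset.univ.filter
      (fun p : (Fin N → Fin (d + 1)) × Fin (d + 1) =>
        StrictMono p.1 ∧ (p.1 ⟨0, hN⟩ : ℕ) ≤ (p.2 : ℕ))) :
    bwdMap N d p ∈ (Finset.range N) ×ˢ (Finset.range (d + 2)).powersetCard (N + 1) := by
  rw [Finset.mem_filter] at hp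
  obtain ⟨-, hmono, h0⟩ := hp
  have ht1 : 0 < (Finset.univ.filter fun a => (p.1 a : ℕ) ≤ (p.2 : ℕ)).card :=
    Finset.card_pos.2 ⟨⟨0, hN⟩, Finset.mem_filter.2 ⟨Finset.mem_univ _, h0⟩⟩
  have ht2 : (Finset.univ.filter fun a => (p.1 a : ℕ) ≤ (p.2 : ℕ)).card ≤ N := by
    refine le_trans (Finset.card_filter_le _ _) ?_
    simp
  have hstrict : ∀ a b : Fin N, a < b →
      (if (p.1 a : ℕ) ≤ (p.2 : ℕ) then (p.1 a : ℕ) else (p.1 a : ℕ) + 1) <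
      (if (p.1 b : ℕ) ≤ (p.2 : ℕ) then (p.1 b : ℕ) else (p.1 b : ℕ) + 1) := by
    intro a b hab
    have : (p.1 a : ℕ) < (p.1 b : ℕ) := hmono hab
    split_ifs <;> omega
  have hinj : Set.InjOn (fun a : Fin N =>
      if (p.1 a : ℕ) ≤ (p.2 : ℕ) then (p.1 a : ℕ) else (p.1 a : ℕ) + 1)
      (Finset.univ : Finset (Fin N)) := by
    intro a _ b _ hab
    rcases lt_trichotomy a b with h' | h' | h'
    · exact absurd hab (ne_of_lt (hstrict a b h'))
    · exact h'
    · exact absurd hab.symm (ne_of_lt (hstrict b a h'))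
  rw [Finset.mem_product, Finset.mem_range, Finset.mem_powersetCard]
  refine ⟨?_, ?_, ?_⟩
  · show (Finset.univ.filter fun a => (p.1 a : ℕ) ≤ (p.2 : ℕ)).card - 1 < N
    omega
  · intro y hy
    simp only [bwdMap, Finset.mem_insert, Finset.mem_image] at hy
    rw [Finset.mem_range]
    have hj : (p.2 : ℕ) < d + 1 := p.2.2
    rcases hy with rfl | ⟨a, -, rfl⟩
    · omega
    · have : (p.1 a : ℕ) < d + 1 := (p.1 a).2
      split_ifs <;> omega
  · simp only [bwdMap]
    rw [Finset.card_insert_of_notMem, Finset.card_image_of_injOn hinj]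
    · simp
    · intro hmem
      rcases Finset.mem_image.1 hmem with ⟨a, -, ha⟩
      split_ifs at ha <;> omega

end

section
variable {N d : ℕ}

lemma fwd_val₁ {s : ℕ} {K : Finset ℕ} (hs : s < N) (hK : K.card = N + 1)
    (hsub : K ⊆ Finset.range (d + 2)) (a : Fin N) :
    ((fwdMap N d (s, K)).1 a : ℕ) =
      if (a : ℕ) ≤ s then kfun K a else kfun K ((a : ℕ) + 1) - 1 := by
  have hk2 := kfun_le hK hsub
  rw [fwd_fst_val]
  have haN : (a : ℕ) < N := a.2
  have h1 : kfun K a < kfun K ((a : ℕ) + 1) := kfun_lt hK (by omega) (by omega)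
  have h2 : kfun K ((a : ℕ) + 1) ≤ d + 1 := hk2 _ (by omega)
  split_ifs <;> omega

lemma fwd_val₂ {s : ℕ} {K : Finset ℕ} (hs : s < N) (hK : K.card = N + 1)
    (hsub : K ⊆ Finset.range (d + 2)) :
    ((fwdMap N d (s, K)).2 : ℕ) = kfun K (s + 1) - 1 := by
  have hk2 := kfun_le hK hsub
  rw [fwd_snd_val]
  have h2 : kfun K (s + 1) ≤ d + 1 := hk2 _ (by omega)
  omega

lemma weight_eq {s : ℕ} {K : Finset ℕ} (hs : s < N) (hK : K.card = N + 1)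
    (hsub : K ⊆ Finset.range (d + 2)) :
    s + ∑ v ∈ K, v =
      N + ((∑ a, ((fwdMap N d (s, K)).1 a : ℕ)) + ((fwdMap N d (s, K)).2 : ℕ)) := by
  have hsum := kfun_sum hK
  have hfin : ∑ a, ((fwdMap N d (s, K)).1 a : ℕ) =
      ∑ n ∈ Finset.range N, (if n ≤ s then kfun K n else kfun K (n + 1) - 1) := by
    have h1 : (∑ a, ((fwdMap N d (s, K)).1 a : ℕ)) =
        ∑ a : Fin N, (if (a : ℕ) ≤ s then kfun K (a : ℕ) else kfun K ((a : ℕ) + 1) - 1) :=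
      Finset.sum_congr rfl fun a _ => fwd_val₁ hs hK hsub a
    rw [h1, Fin.sum_univ_eq_sum_range (fun n => if n ≤ s then kfun K n else kfun K (n + 1) - 1) N]
  have e1 : ∑ n ∈ Finset.range (N + 1), kfun K n =
      (∑ n ∈ Finset.range (s + 1), kfun K n) + ∑ n ∈ Finset.Ico (s + 1) (N + 1), kfun K n := by
    rw [Finset.range_eq_Ico, ← Finset.sum_Ico_consecutive _ (Nat.zero_le (s + 1)) (by omega),
      ← Finset.range_eq_Ico]
  have e2 : ∑ n ∈ Finset.Ico (s + 1) (N + 1), kfun K n =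
      ∑ n ∈ Finset.Ico s N, kfun K (n + 1) := by
    rw [Finset.sum_Ico_eq_sum_range, Finset.sum_Ico_eq_sum_range]
    have h : N + 1 - (s + 1) = N - s := by omega
    rw [h]
    exact Finset.sum_congr rfl fun i _ => congrArg (kfun K) (by omega)
  have e3 : ∑ n ∈ Finset.Ico s N, kfun K (n + 1) =
      kfun K (s + 1) + ∑ n ∈ Finset.Ico (s + 1) N, kfun K (n + 1) :=
    Finset.sum_eq_sum_Ico_succ_bot hs _
  have e4 : ∑ n ∈ Finset.Ico (s + 1) N, kfun K (n + 1) =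
      (∑ n ∈ Finset.Ico (s + 1) N, (kfun K (n + 1) - 1)) + (N - (s + 1)) := by
    have h : ∀ n ∈ Finset.Ico (s + 1) N, kfun K (n + 1) = (kfun K (n + 1) - 1) + 1 := by
      intro n hn
      rw [Finset.mem_Ico] at hn
      have := kfun_lt hK (show 0 < n + 1 by omega) (show n + 1 < N + 1 by omega)
      omega
    rw [Finset.sum_congr rfl h, Finset.sum_add_distrib, Finset.sum_const, Nat.card_Ico,
      smul_eq_mul, mul_one]
  have e5 : ∑ n ∈ Finset.range N, (if n ≤ s then kfun K n else kfun K (n + 1) - 1) =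
      (∑ n ∈ Finset.range (s + 1), kfun K n) +
        ∑ n ∈ Finset.Ico (s + 1) N, (kfun K (n + 1) - 1) := by
    rw [Finset.range_eq_Ico,
      ← Finset.sum_Ico_consecutive _ (Nat.zero_le (s + 1)) (show s + 1 ≤ N by omega)]
    congr 1
    · rw [← Finset.range_eq_Ico]
      exact Finset.sum_congr rfl fun n hn => by
        rw [Finset.mem_range] at hn
        rw [if_pos (by omega)]
    · exact Finset.sum_congr rfl fun n hn => by
        rw [Finset.mem_Ico] at hn
        rw [if_neg (by omega)]
  have hk1pos : 1 ≤ kfun K (s + 1) :=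
    le_trans (by omega) (kfun_lt hK (show 0 < s + 1 by omega) (by omega))
  rw [hsum, fwd_val₂ hs hK hsub, hfin, e1, e2, e3, e4, e5]
  omega

lemma bwd_fwd (hN : 0 < N) {x : ℕ × Finset ℕ}
    (hx : x ∈ (Finset.range N) ×ˢ (Finset.range (d + 2)).powersetCard (N + 1)) :
    bwdMap N d (fwdMap N d x) = x := by
  obtain ⟨s, K⟩ := x
  have hx' := hx
  rw [Finset.mem_product, Finset.mem_range, Finset.mem_powersetCard] at hx'
  have hs : s < N := hx'.1
  have hsub : K ⊆ Finset.range (d + 2) := hx'.2.1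
  have hK : K.card = N + 1 := hx'.2.2
  have hcond : ∀ a : Fin N,
      (((fwdMap N d (s, K)).1 a : ℕ) ≤ ((fwdMap N d (s, K)).2 : ℕ)) ↔ (a : ℕ) ≤ s := by
    intro a
    rw [fwd_val₁ hs hK hsub, fwd_val₂ hs hK hsub]
    have haN : (a : ℕ) < N := a.2
    by_cases hc : (a : ℕ) ≤ s
    · have := kfun_lt hK (show (a : ℕ) < s + 1 by omega) (by omega)
      rw [if_pos hc]
      constructor <;> intro <;> omega
    · have h1 := kfun_lt hK (show s + 1 < (a : ℕ) + 1 by omega) (by omega)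
      have h2 := kfun_lt hK (show 0 < s + 1 by omega) (show s + 1 < N + 1 by omega)
      rw [if_neg hc]
      constructor <;> intro <;> omega
  rw [Prod.ext_iff]
  constructor
  · show (Finset.univ.filter fun a =>
      ((fwdMap N d (s, K)).1 a : ℕ) ≤ ((fwdMap N d (s, K)).2 : ℕ)).card - 1 = s
    rw [Finset.filter_congr (fun a _ => by rw [hcond a]), card_filter_le_val hs]
    omega
  · show insert (((fwdMap N d (s, K)).2 : ℕ) + 1)
      (Finset.univ.image fun a =>
        if ((fwdMap N d (s, K)).1 a : ℕ) ≤ ((fwdMap N d (s, K)).2 : ℕ)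
        then ((fwdMap N d (s, K)).1 a : ℕ) else ((fwdMap N d (s, K)).1 a : ℕ) + 1) = K
    have hk1pos : 1 ≤ kfun K (s + 1) :=
      le_trans (by omega) (kfun_lt hK (show 0 < s + 1 by omega) (by omega))
    have hj1 : ((fwdMap N d (s, K)).2 : ℕ) + 1 = kfun K (s + 1) := by
      rw [fwd_val₂ hs hK hsub]; omega
    have hface : ∀ a : Fin N,
        (if ((fwdMap N d (s, K)).1 a : ℕ) ≤ ((fwdMap N d (s, K)).2 : ℕ)
          then ((fwdMap N d (s, K)).1 a : ℕ) else ((fwdMap N d (s, K)).1 a : ℕ) + 1) =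
        if (a : ℕ) ≤ s then kfun K a else kfun K ((a : ℕ) + 1) := by
      intro a
      have haN : (a : ℕ) < N := a.2
      by_cases hc : (a : ℕ) ≤ s
      · rw [if_pos ((hcond a).2 hc), fwd_val₁ hs hK hsub, if_pos hc, if_pos hc]
      · rw [if_neg (fun h => hc ((hcond a).1 h)), fwd_val₁ hs hK hsub, if_neg hc, if_neg hc]
        have : 1 ≤ kfun K ((a : ℕ) + 1) :=
          le_trans (by omega) (kfun_lt hK (show 0 < (a : ℕ) + 1 by omega) (by omega))
        omega
    have hmem := bwd_mem hN (fwd_mem hN hx)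
    rw [Finset.mem_product, Finset.mem_powersetCard] at hmem
    apply Finset.eq_of_subset_of_card_le
    · intro y hy
      rcases Finset.mem_insert.1 hy with rfl | hy'
      · rw [hj1]; exact kfun_mem hK (by omega)
      · rcases Finset.mem_image.1 hy' with ⟨a, -, rfl⟩
        rw [hface a]
        have haN : (a : ℕ) < N := a.2
        split_ifs
        · exact kfun_mem hK (by omega)
        · exact kfun_mem hK (by omega)
    · rw [hK]
      exact le_of_eq hmem.2.2.symm

end

section
variable {N d : ℕ}

lemma fwd_bwd (hN : 0 < N) {p : (Fin N → Fin (d + 1)) × Fin (d + 1)}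
    (hp : p ∈ Finset.univ.filter
      (fun p : (Fin N → Fin (d + 1)) × Fin (d + 1) =>
        StrictMono p.1 ∧ (p.1 ⟨0, hN⟩ : ℕ) ≤ (p.2 : ℕ))) :
    fwdMap N d (bwdMap N d p) = p := by
  rw [Finset.mem_filter] at hp
  obtain ⟨-, hmono, h0⟩ := hp
  set t := (Finset.univ.filter fun a => (p.1 a : ℕ) ≤ (p.2 : ℕ)).card with htdef
  have ht1 : 0 < t := Finset.card_pos.2 ⟨⟨0, hN⟩, Finset.mem_filter.2 ⟨Finset.mem_univ _, h0⟩⟩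
  have ht2 : t ≤ N := le_trans (Finset.card_filter_le _ _) (by simp)
  have hinit : ∀ a : Fin N, ((p.1 a : ℕ) ≤ (p.2 : ℕ)) ↔ (a : ℕ) < t := fun a =>
    filter_init (fun a b hab hPb =>
      le_trans (show (p.1 a : ℕ) ≤ (p.1 b : ℕ) from hmono.monotone hab) hPb) a
  set g : ℕ → ℕ := fun n =>
    if hn : n < t then (p.1 ⟨n, lt_of_lt_of_le hn ht2⟩ : ℕ)
    else if n = t then (p.2 : ℕ) + 1
    else if hn' : n - 1 < N then (p.1 ⟨n - 1, hn'⟩ : ℕ) + 1 else 0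
    with hgdef
  have hgA : ∀ n (hn : n < t), g n = (p.1 ⟨n, lt_of_lt_of_le hn ht2⟩ : ℕ) := by
    intro n hn
    simp only [hgdef]
    rw [dif_pos hn]
  have hgB : g t = (p.2 : ℕ) + 1 := by
    simp only [hgdef]
    rw [dif_neg (lt_irrefl t)]
    simp
  have hgC : ∀ n (h1 : t < n) (h2 : n - 1 < N), g n = (p.1 ⟨n - 1, h2⟩ : ℕ) + 1 := by
    intro n h1 h2
    simp only [hgdef]
    rw [dif_neg (by omega), if_neg (by omega), dif_pos h2]
  have hgmono : ∀ a b : ℕ, a < b → b < N + 1 → g a < g b := by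
    intro a b hab hb
    by_cases hat : a < t
    · rw [hgA a hat]
      by_cases hbt : b < t
      · rw [hgA b hbt]
        exact hmono (Fin.mk_lt_mk.2 hab)
      · by_cases hbt2 : b = t
        · subst hbt2
          rw [hgB]
          have h1 : (p.1 ⟨a, lt_of_lt_of_le hat ht2⟩ : ℕ) ≤ (p.2 : ℕ) :=
            (hinit _).2 hat
          omega
        · have h2 : b - 1 < N := by omega
          rw [hgC b (by omega) h2]
          have h3 : (p.1 ⟨a, lt_of_lt_of_le hat ht2⟩ : ℕ) ≤ (p.1 ⟨b - 1, h2⟩ : ℕ) :=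
            hmono.monotone (Fin.mk_le_mk.2 (by omega))
          omega
    · by_cases hat2 : a = t
      · subst hat2
        rw [hgB]
        have h2 : b - 1 < N := by omega
        rw [hgC b (by omega) h2]
        have h3 : ¬ ((p.1 ⟨b - 1, h2⟩ : ℕ) ≤ (p.2 : ℕ)) := by
          intro h
          have := (hinit _).1 h
          simp only [Fin.val_mk] at this
          omega
        omega
      · have ha2 : a - 1 < N := by omega
        have hb2 : b - 1 < N := by omega
        rw [hgC a (by omega) ha2, hgC b (by omega) hb2]
        have h3 : (p.1 ⟨a - 1, ha2⟩ : ℕ) < (p.1 ⟨b - 1, hb2⟩ : ℕ) :=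
          hmono (Fin.mk_lt_mk.2 (by omega))
        omega
  have hK' : (bwdMap N d p).2 = (Finset.range (N + 1)).image g := by
    ext y
    simp only [bwdMap, Finset.mem_insert, Finset.mem_image, Finset.mem_range]
    constructor
    · rintro (rfl | ⟨a, -, rfl⟩)
      · exact ⟨t, by omega, hgB⟩
      · by_cases hc : (p.1 a : ℕ) ≤ (p.2 : ℕ)
        · have hat : (a : ℕ) < t := (hinit a).1 hc
          refine ⟨(a : ℕ), by have := a.2; omega, ?_⟩
          rw [hgA _ hat, if_pos hc]
        · have hat : ¬ ((a : ℕ) < t) := fun h => hc ((hinit a).2 (by simpa using h))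
          refine ⟨(a : ℕ) + 1, by have := a.2; omega, ?_⟩
          rw [hgC ((a : ℕ) + 1) (by omega) (by simpa using a.2), if_neg hc]
          rfl
    · rintro ⟨n, hn, rfl⟩
      by_cases h1 : n < t
      · right
        refine ⟨⟨n, lt_of_lt_of_le h1 ht2⟩, Finset.mem_univ _, ?_⟩
        rw [if_pos ((hinit _).2 (by simpa using h1))]
        exact (hgA n h1).symm
      · by_cases h2 : n = t
        · left
          rw [h2, hgB]
        · right
          have h3 : n - 1 < N := by omega
          refine ⟨⟨n - 1, h3⟩, Finset.mem_univ _, ?_⟩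
          rw [if_neg (fun h => by
            have := (hinit _).1 h
            simp only [Fin.val_mk] at this
            omega)]
          exact (hgC n (by omega) h3).symm
  have hkg : ∀ n, n < N + 1 → kfun (bwdMap N d p).2 n = g n := by
    intro n hn
    rw [hK']
    exact kfun_enum hgmono hn
  have hpair : bwdMap N d p = (t - 1, (bwdMap N d p).2) := rfl
  rw [Prod.ext_iff]
  constructor
  · funext a
    apply Fin.ext
    rw [hpair, fwd_fst_val]
    by_cases hc : (a : ℕ) < t
    · rw [if_pos (by omega), hkg _ (by have := a.2; omega), hgA _ hc]
      have h4 : (p.1 ⟨(a : ℕ), lt_of_lt_of_le hc ht2⟩ : ℕ) = (p.1 a : ℕ) := rfl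
      have h5 : (p.1 a : ℕ) < d + 1 := (p.1 a).2
      omega
    · rw [if_neg (by omega), hkg _ (by have := a.2; omega),
        hgC ((a : ℕ) + 1) (by omega) (by simpa using a.2)]
      have h4 : (p.1 ⟨(a : ℕ) + 1 - 1, by simpa using a.2⟩ : ℕ) = (p.1 a : ℕ) := rfl
      have h5 : (p.1 a : ℕ) < d + 1 := (p.1 a).2
      omega
  · apply Fin.ext
    rw [hpair, fwd_snd_val, show t - 1 + 1 = t from by omega, hkg t (by omega), hgB]
    have h5 : (p.2 : ℕ) < d + 1 := p.2.2
    omega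

end

/-- Corollary 3.2 of the paper. The `q`-binomial identity
`q^{N(N-1)/2} [N]_q \binom{d+2}{N+1}_q = s_{(2,1^{N-1})}(1,q,…,q^d)`, written in `ℤ[q]` as:
`(Σ_{s<N} q^s) · (Σ_{K ⊆ {0,…,d+1}, |K| = N+1} q^{ΣK}) = q^N · Σ_{(i,j) semistandard} q^{|i|+j}`,
where the right-hand sum is over all semistandard pairs `(i,j) ∈ I(d,N) × {0,…,d}`. -/
theorem statement19 (N d : ℕ) (hN : 0 < N) :
    (∑ s ∈ Finset.range N, (Polynomial.X : Polynomial ℤ) ^ s) *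
      (∑ K ∈ (Finset.range (d + 2)).powersetCard (N + 1), Polynomial.X ^ (∑ x ∈ K, x)) =
    Polynomial.X ^ N *
      ∑ p ∈ Finset.univ.filter
          (fun p : (Fin N → Fin (d + 1)) × Fin (d + 1) =>
            StrictMono p.1 ∧ (p.1 ⟨0, hN⟩ : ℕ) ≤ (p.2 : ℕ)),
        Polynomial.X ^ ((∑ a, (p.1 a : ℕ)) + (p.2 : ℕ)) := by
  rw [Finset.sum_mul_sum, Finset.mul_sum, ← Finset.sum_product']
  refine Finset.sum_nbij' (fwdMap N d) (bwdMap N d) (fun x hx => fwd_mem hN hx)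
    (fun p hp => bwd_mem hN hp) (fun x hx => bwd_fwd hN hx) (fun p hp => fwd_bwd hN hp) ?_
  intro x hx
  obtain ⟨s, K⟩ := x
  have hx' := hx
  rw [Finset.mem_product, Finset.mem_range, Finset.mem_powersetCard] at hx'
  rw [← pow_add, ← pow_add]
  congr 1
  exact weight_eq hx'.1 hx'.2.2 hx'.2.1
end
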